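/- arXiv:2107.07098 — 9 statements merged into one kernel-verified Lean document; each statement's English description precedes it below -/
import Mathlib

section
/- Let p ∈ ℕ and a > 0. Define the Matérn kernel of half-integer order ν = p + 1/2 with decay rate a by m_p(τ; a) = e^{−a|τ|} · (p!/(2p)!) · Σ_{i=0}^{p} ((p+i)!/(i!(p−i)!)) (2a|τ|)^{p−i}. Then for every ω ∈ ℝ, its Fourier transform satisfies ∫_ℝ m_p(τ; a) e^{−iωτ} dτ = (2a)^{2p+1} (p!)² / (2p)! · (ω² + a²)^{−(p+1)}. -/
open MeasureTheory Real

section Prelims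
open Set

lemma intOn (k : ℕ) {a : ℝ} (ha : 0 < a) :
    IntegrableOn (fun t : ℝ => t ^ k * Real.exp (-a * t)) (Ioi 0) := by
  have h : (-1 : ℝ) < k := lt_of_lt_of_le (by norm_num) (Nat.cast_nonneg k)
  have := integrableOn_rpow_mul_exp_neg_mul_rpow (p := 1) (s := k) (b := a) h one_pos ha
  refine this.congr_fun (fun x hx => ?_) measurableSet_Ioi
  beta_reduce
  rw [Real.rpow_natCast, Real.rpow_one]

lemma normC (k : ℕ) (z : ℂ) {t : ℝ} (ht : 0 < t) :
    ‖(t:ℂ) ^ k * Complex.exp (-(z * t))‖ = t ^ k * Real.exp (-z.re * t) := by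
  rw [norm_mul, norm_pow, Complex.norm_exp, Complex.norm_real, Real.norm_eq_abs,
    abs_of_pos ht]
  simp [Complex.mul_re]

lemma intOnC (k : ℕ) {z : ℂ} (hz : 0 < z.re) :
    IntegrableOn (fun t : ℝ => (t : ℂ) ^ k * Complex.exp (-(z * t))) (Ioi 0) := by
  have hm : AEStronglyMeasurable (fun t : ℝ => (t : ℂ) ^ k * Complex.exp (-(z * t)))
      (volume.restrict (Ioi 0)) := by
    apply Continuous.aestronglyMeasurable; fun_prop
  refine ⟨hm, ?_⟩
  apply MeasureTheory.HasFiniteIntegral.congr' (intOn k hz).2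
  filter_upwards [ae_restrict_mem measurableSet_Ioi] with t ht
  rw [normC k z ht, Real.norm_eq_abs,
    abs_of_pos (mul_pos (pow_pos ht k) (Real.exp_pos _))]

lemma tendsto_pow_mul_exp_neg_mul (n : ℕ) {b : ℝ} (hb : 0 < b) :
    Filter.Tendsto (fun x : ℝ => x ^ n * Real.exp (-b * x)) Filter.atTop (nhds 0) := by
  have h1 := (tendsto_pow_mul_exp_neg_atTop_nhds_zero n).comp
    (Filter.tendsto_id.const_mul_atTop hb)
  have h2 := h1.const_mul ((b : ℝ) ^ n)⁻¹
  rw [mul_zero] at h2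
  refine h2.congr (fun x => ?_)
  simp only [Function.comp]
  rw [mul_pow, neg_mul]
  field_simp
  simp only [id_eq]

lemma tendstoC (k : ℕ) {z : ℂ} (hz : 0 < z.re) (c : ℂ) :
    Filter.Tendsto (fun t : ℝ => c * ((t:ℂ) ^ k * Complex.exp (-(z * t))))
      Filter.atTop (nhds 0) := by
  rw [tendsto_zero_iff_norm_tendsto_zero]
  have h := (tendsto_pow_mul_exp_neg_mul k hz).const_mul ‖c‖
  rw [mul_zero] at h
  apply h.congr'
  filter_upwards [Filter.eventually_gt_atTop 0] with t ht
  rw [norm_mul, normC k z ht]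

lemma hasDerivAtG (k : ℕ) {z : ℂ} (hz : z ≠ 0) (t : ℝ) :
    HasDerivAt (fun t : ℝ => -((t:ℂ) ^ (k+1) * Complex.exp (-(z * t))) / z)
      (((t:ℂ) ^ (k+1) * Complex.exp (-(z * t))
        - ((k:ℂ)+1) / z * ((t:ℂ) ^ k * Complex.exp (-(z * t))))) t := by
  have hpow := hasDerivAt_pow (k+1) (t:ℂ)
  have hexp := (HasDerivAt.const_mul z (hasDerivAt_id (t:ℂ))).neg.cexp
  have h := (((hpow.mul hexp).neg).div_const z).comp_ofReal
  convert h using 1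
  · funext s; simp
  have : ((k:ℂ)+1) = ((k+1 : ℕ) : ℂ) := by push_cast; ring
  simp only [Pi.neg_apply, id, Nat.cast_add, Nat.cast_one, Nat.add_sub_cancel, mul_one]
  field_simp
  ring

lemma Jint (k : ℕ) {z : ℂ} (hz : 0 < z.re) :
    ∫ t in Ioi (0:ℝ), (t:ℂ) ^ k * Complex.exp (-(z * t)) = (k.factorial : ℂ) / z ^ (k+1) := by
  have hz0 : z ≠ 0 := by intro h; rw [h] at hz; simp at hz
  induction k with
  | zero =>
    have hF : ∀ t ∈ Ici (0:ℝ), HasDerivAt (fun t : ℝ => -Complex.exp (-(z * t)) / z)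
        ((t:ℂ) ^ 0 * Complex.exp (-(z * t))) t := by
      intro t _
      have h := (((HasDerivAt.const_mul z (hasDerivAt_id (t:ℂ))).neg.cexp).neg.div_const
        z).comp_ofReal
      convert h using 1
      · funext s; simp [neg_div]
      simp only [Pi.neg_apply, id, pow_zero, one_mul, mul_one]
      field_simp
    have htend : Filter.Tendsto (fun t : ℝ => -Complex.exp (-(z * t)) / z)
        Filter.atTop (nhds 0) := by
      apply (tendstoC 0 hz (-1/z)).congr (fun t => ?_)
      rw [pow_zero, one_mul]; ring
    rw [integral_Ioi_of_hasDerivAt_of_tendsto' hF (intOnC 0 hz) htend]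
    simp [Complex.exp_zero]
    rw [neg_div, neg_neg, one_div]
  | succ k ih =>
    have hF : ∀ t ∈ Ici (0:ℝ), HasDerivAt
        (fun t : ℝ => -((t:ℂ) ^ (k+1) * Complex.exp (-(z * t))) / z)
        (((t:ℂ) ^ (k+1) * Complex.exp (-(z * t))
          - ((k:ℂ)+1) / z * ((t:ℂ) ^ k * Complex.exp (-(z * t))))) t :=
      fun t _ => hasDerivAtG k hz0 t
    have hint : IntegrableOn (fun t : ℝ => ((t:ℂ) ^ (k+1) * Complex.exp (-(z * t))
        - ((k:ℂ)+1) / z * ((t:ℂ) ^ k * Complex.exp (-(z * t))))) (Ioi 0) :=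
      (intOnC (k+1) hz).sub ((intOnC k hz).const_mul _)
    have htend : Filter.Tendsto (fun t : ℝ => -((t:ℂ) ^ (k+1) * Complex.exp (-(z * t))) / z)
        Filter.atTop (nhds 0) := by
      apply (tendstoC (k+1) hz (-1/z)).congr (fun t => ?_)
      ring
    have h0 := integral_Ioi_of_hasDerivAt_of_tendsto' hF hint htend
    rw [MeasureTheory.integral_sub (intOnC (k+1) hz) ((intOnC k hz).const_mul _),
      MeasureTheory.integral_const_mul, ih] at h0
    simp only [Complex.ofReal_zero, ne_eq, zero_pow, Nat.succ_ne_zero, not_false_iff] at h0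
    rw [zero_mul, neg_zero, zero_div, sub_zero, sub_eq_zero] at h0
    rw [h0, Nat.factorial_succ]
    push_cast
    rw [div_mul_div_comm, pow_succ]
    ring

lemma lineInt (k : ℕ) {a : ℝ} (ha : 0 < a) (ω : ℝ) :
    ∫ τ : ℝ, ((|τ| ^ k * Real.exp (-a * |τ|) : ℝ) : ℂ) * Complex.exp (-Complex.I * ω * τ)
      = (k.factorial : ℂ) / ((a:ℂ) + Complex.I * ω) ^ (k+1)
        + (k.factorial : ℂ) / ((a:ℂ) - Complex.I * ω) ^ (k+1) := by
  set z : ℂ := (a:ℂ) + Complex.I * ω with hzdef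
  set w : ℂ := (a:ℂ) - Complex.I * ω with hwdef
  have hzre : z.re = a := by simp [hzdef]
  have hwre : w.re = a := by simp [hwdef]
  have hz : 0 < z.re := by rw [hzre]; exact ha
  have hw : 0 < w.re := by rw [hwre]; exact ha
  set f : ℝ → ℂ := fun τ => ((|τ| ^ k * Real.exp (-a * |τ|) : ℝ) : ℂ)
    * Complex.exp (-Complex.I * ω * τ) with hfdef
  have heqIoi : ∀ τ ∈ Ioi (0:ℝ), f τ = (τ:ℂ) ^ k * Complex.exp (-(z * τ)) := by
    intro τ hτ
    rw [hfdef]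
    simp only
    rw [abs_of_pos hτ]
    push_cast
    rw [mul_assoc, ← Complex.exp_add]
    rw [hzdef]; ring_nf
  have heqIic : ∀ τ ∈ Ioi (0:ℝ), f (-τ) = (τ:ℂ) ^ k * Complex.exp (-(w * τ)) := by
    intro τ hτ
    rw [hfdef]
    simp only
    rw [abs_neg, abs_of_pos hτ]
    push_cast
    rw [mul_assoc, ← Complex.exp_add]
    rw [hwdef]; ring_nf
  have hIoi : IntegrableOn f (Ioi 0) :=
    (intOnC k hz).congr_fun (fun τ hτ => (heqIoi τ hτ).symm) measurableSet_Ioi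
  have hIicInt : IntegrableOn f (Iic 0) := by
    rw [← Measure.map_neg_eq_self (volume : Measure ℝ)]
    have m : MeasurableEmbedding fun x : ℝ => -x := (Homeomorph.neg ℝ).measurableEmbedding
    rw [m.integrableOn_map_iff]
    have : (fun x : ℝ => -x) ⁻¹' (Iic 0) = Ici 0 := by
      ext x; simp
    rw [this]
    rw [integrableOn_Ici_iff_integrableOn_Ioi]
    exact (intOnC k hw).congr_fun (fun τ hτ => (heqIic τ hτ).symm) measurableSet_Ioi
  rw [← intervalIntegral.integral_Iic_add_Ioi hIicInt hIoi]
  have h1 : ∫ τ in Ioi (0:ℝ), f τ = (k.factorial : ℂ) / z ^ (k+1) := by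
    rw [MeasureTheory.setIntegral_congr_fun measurableSet_Ioi heqIoi]
    exact Jint k hz
  have h2 : ∫ τ in Iic (0:ℝ), f τ = (k.factorial : ℂ) / w ^ (k+1) := by
    rw [← neg_zero, ← integral_comp_neg_Ioi]
    rw [MeasureTheory.setIntegral_congr_fun measurableSet_Ioi heqIic]
    exact Jint k hw
  rw [h1, h2]
  ring

end Prelims

section Comb
open Finset

lemma hockey (M b : ℕ) : ∑ j ∈ range (M+1), (j.choose b) = (M+1).choose (b+1) := by
  induction M with
  | zero => cases b <;> simp [Nat.choose_eq_zero_of_lt]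
  | succ M ih => rw [Finset.sum_range_succ, ih, Nat.choose_succ_succ (M+1) b, Nat.add_comm]

lemma vand (N a b : ℕ) : ∑ m ∈ range (N+1), (m.choose a) * ((N - m).choose b)
    = (N+1).choose (a+b+1) := by
  induction N generalizing a b with
  | zero => cases a <;> cases b <;> simp [Nat.choose_eq_zero_of_lt]
  | succ N ih =>
    cases a with
    | zero =>
      simp only [Nat.choose_zero_right, one_mul, Nat.zero_add]
      rw [← hockey (N+1) b]
      conv_rhs => rw [← Finset.sum_range_reflect]
      apply Finset.sum_congr rfl
      intro m hm
      simp only [Finset.mem_range] at hm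
      congr 1

    | succ a =>
      rw [Finset.sum_range_succ']
      simp only [Nat.choose_succ_succ, Nat.succ_sub_succ, Nat.choose_zero_right]
      have : ∀ i ∈ range (N+1), (i.choose a + i.choose (a+1)) * ((N - i).choose b)
          = i.choose a * ((N-i).choose b) + i.choose (a+1) * ((N-i).choose b) := by
        intro i _; ring
      rw [Finset.sum_congr rfl this, Finset.sum_add_distrib, ih a b, ih (a+1) b]
      have h0 : Nat.choose 0 (a+1) = 0 := by simp
      rw [h0, zero_mul, add_zero,
        show a+1+b = a+b+1 from by omega,
        Nat.choose_succ_succ N (a+b+1)]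


lemma coeffId (p k : ℕ) (hk : k ≤ p) :
    ∑ i ∈ range (p+1), ((p+i).choose p) * ((p-i).choose (p-k)) = (2*p+1).choose k := by
  have h1 : ∑ m ∈ range (2*p+1), (m.choose p) * ((2*p - m).choose (p-k))
      = (2*p+1).choose (p + (p-k) + 1) := vand (2*p) p (p-k)
  have h2 : (2*p+1).choose (p + (p-k) + 1) = (2*p+1).choose k := by
    rw [show p + (p-k) + 1 = (2*p+1) - k from by omega]
    exact Nat.choose_symm (by omega)
  rw [← h2, ← h1]
  conv_rhs => rw [show 2*p+1 = p + (p+1) from by omega, Finset.sum_range_add]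
  have hz : ∑ m ∈ range p, (m.choose p) * ((2*p - m).choose (p-k)) = 0 := by
    apply Finset.sum_eq_zero
    intro m hm
    simp only [Finset.mem_range] at hm
    rw [Nat.choose_eq_zero_of_lt hm, zero_mul]
  rw [hz, zero_add]
  apply Finset.sum_congr rfl
  intro i hi
  congr 2
  omega

lemma keyL (p : ℕ) (z w : ℂ) :
    ∑ i ∈ range (p+1), (((p+i).choose i : ℕ) : ℂ) * (z+w)^(p-i) * (w^(p+1) * z^i)
      = ∑ k ∈ range (p+1), (((2*p+1).choose k : ℕ) : ℂ) * z^k * w^(2*p+1-k) := by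
  have hR : ∀ k ∈ range (p+1), (((2*p+1).choose k : ℕ) : ℂ) * z^k * w^(2*p+1-k)
      = ∑ i ∈ range (p+1),
          ((((p+i).choose p) * ((p-i).choose (p-k)) : ℕ) : ℂ) * z^k * w^(2*p+1-k) := by
    intro k hk
    simp only [Finset.mem_range] at hk
    rw [← Finset.sum_mul, ← Finset.sum_mul, ← Nat.cast_sum, coeffId p k (by omega)]
  rw [Finset.sum_congr rfl hR, Finset.sum_comm]
  apply Finset.sum_congr rfl
  intro i hi
  simp only [Finset.mem_range] at hi
  have hip : i ≤ p := by omega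
  -- expand (z+w)^(p-i)
  rw [add_pow, Finset.mul_sum, Finset.sum_mul]
  -- RHS : drop vanishing terms k < i
  rw [show (range (p+1) : Finset ℕ) = Ico 0 (p+1) from by rw [Finset.range_eq_Ico]]
  rw [← Finset.sum_Ico_consecutive _ (Nat.zero_le i) (by omega : i ≤ p+1)]
  have hz2 : ∑ k ∈ Ico 0 i,
      ((((p+i).choose p) * ((p-i).choose (p-k)) : ℕ) : ℂ) * z^k * w^(2*p+1-k) = 0 := by
    apply Finset.sum_eq_zero
    intro k hk
    simp only [Finset.mem_Ico] at hk
    rw [Nat.choose_eq_zero_of_lt (by omega : p - i < p - k), Nat.mul_zero]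
    simp
  rw [hz2, zero_add, Finset.sum_Ico_eq_sum_range]
  rw [show p + 1 - i = p - i + 1 from by omega]
  apply Finset.sum_congr rfl
  intro j hj
  simp only [Finset.mem_range] at hj
  have hj' : j ≤ p - i := by omega
  have e1 : (p+i).choose p = (p+i).choose i := Nat.choose_symm_add
  have e2 : (p-i).choose (p - (i+j)) = (p-i).choose j := by
    rw [show p - (i+j) = (p-i) - j from by omega]
    exact Nat.choose_symm (by omega)
  rw [e1, e2]
  push_cast
  rw [show 2*p+1 - (i+j) = (p-i-j) + (p+1) from by omega, pow_add, pow_add]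
  ring

lemma keyId (p : ℕ) (z w : ℂ) :
    ∑ i ∈ range (p+1), (((p+i).choose i : ℕ) : ℂ) * (z+w)^(p-i)
        * (w^(p+1) * z^i + z^(p+1) * w^i)
      = (z+w)^(2*p+1) := by
  have hsplit : ∀ i ∈ range (p+1), (((p+i).choose i : ℕ) : ℂ) * (z+w)^(p-i)
        * (w^(p+1) * z^i + z^(p+1) * w^i)
      = (((p+i).choose i : ℕ) : ℂ) * (z+w)^(p-i) * (w^(p+1) * z^i)
        + (((p+i).choose i : ℕ) : ℂ) * (w+z)^(p-i) * (z^(p+1) * w^i) := by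
    intro i _
    rw [add_comm w z]
    ring
  rw [Finset.sum_congr rfl hsplit, Finset.sum_add_distrib, keyL p z w, keyL p w z]
  rw [add_pow]
  conv_rhs => rw [show 2*p+1+1 = (p+1) + (p+1) from by omega, Finset.sum_range_add]
  congr 1
  · apply Finset.sum_congr rfl
    intro k _
    ring
  · rw [← Finset.sum_range_reflect]
    apply Finset.sum_congr rfl
    intro x hx
    simp only [Finset.mem_range] at hx
    have e1 : p + 1 - 1 - x = p - x := by omega
    have e2 : (2*p+1).choose (p - x) = (2*p+1).choose (p+1+x) := by
      rw [show p + 1 + x = (2*p+1) - (p - x) from by omega]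
      exact (Nat.choose_symm (by omega)).symm
    have e3 : 2*p+1 - (p-x) = p+1+x := by omega
    have e4 : 2*p+1 - (p+1+x) = p - x := by omega
    rw [e1, e2, e3, e4]
    ring

end Comb

section LineInt
open Set
lemma lineIntegrable (k : ℕ) {a : ℝ} (ha : 0 < a) (ω : ℝ) :
    Integrable (fun τ : ℝ => ((|τ| ^ k * Real.exp (-a * |τ|) : ℝ) : ℂ)
      * Complex.exp (-Complex.I * ω * τ)) := by
  set z : ℂ := (a:ℂ) + Complex.I * ω with hzdef
  set w : ℂ := (a:ℂ) - Complex.I * ω with hwdef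
  have hz : 0 < z.re := by simp [hzdef, ha]
  have hw : 0 < w.re := by simp [hwdef, ha]
  set f : ℝ → ℂ := fun τ => ((|τ| ^ k * Real.exp (-a * |τ|) : ℝ) : ℂ)
    * Complex.exp (-Complex.I * ω * τ) with hfdef
  have heqIoi : ∀ τ ∈ Ioi (0:ℝ), f τ = (τ:ℂ) ^ k * Complex.exp (-(z * τ)) := by
    intro τ hτ
    rw [hfdef]; simp only
    rw [abs_of_pos hτ]; push_cast
    rw [mul_assoc, ← Complex.exp_add]; rw [hzdef]; ring_nf
  have heqIic : ∀ τ ∈ Ioi (0:ℝ), f (-τ) = (τ:ℂ) ^ k * Complex.exp (-(w * τ)) := by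
    intro τ hτ
    rw [hfdef]; simp only
    rw [abs_neg, abs_of_pos hτ]; push_cast
    rw [mul_assoc, ← Complex.exp_add]; rw [hwdef]; ring_nf
  have hIoi : IntegrableOn f (Ioi 0) :=
    (intOnC k hz).congr_fun (fun τ hτ => (heqIoi τ hτ).symm) measurableSet_Ioi
  have hIicInt : IntegrableOn f (Iic 0) := by
    rw [← Measure.map_neg_eq_self (volume : Measure ℝ)]
    have m : MeasurableEmbedding fun x : ℝ => -x := (Homeomorph.neg ℝ).measurableEmbedding
    rw [m.integrableOn_map_iff]
    have hs : (fun x : ℝ => -x) ⁻¹' (Iic 0) = Ici 0 := by ext x; simp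
    rw [hs, integrableOn_Ici_iff_integrableOn_Ioi]
    exact (intOnC k hw).congr_fun (fun τ hτ => (heqIic τ hτ).symm) measurableSet_Ioi
  have := hIicInt.union hIoi
  rwa [Iic_union_Ioi, integrableOn_univ] at this

end LineInt
/-- The Matérn kernel of half-integer order `ν = p + 1/2` with decay rate `a`. -/
noncomputable def maternKernel (p : ℕ) (a : ℝ) (τ : ℝ) : ℝ :=
  Real.exp (-a * |τ|) * ((p.factorial : ℝ) / ((2 * p).factorial : ℝ)) *
    ∑ i ∈ Finset.range (p + 1),
      (((p + i).factorial : ℝ) / ((i.factorial : ℝ) * ((p - i).factorial : ℝ))) *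
        (2 * a * |τ|) ^ (p - i)

/-- The Fourier transform of the half-integer Matérn kernel is
`(2a)^{2p+1} (p!)² / (2p)! · (ω² + a²)^{-(p+1)}`. -/
theorem fourier_matern (p : ℕ) (a : ℝ) (ha : 0 < a) (ω : ℝ) :
    ∫ τ : ℝ, (maternKernel p a τ : ℂ) * Complex.exp (-Complex.I * ω * τ)
      = (((2 * a) ^ (2 * p + 1) * (p.factorial : ℝ) ^ 2 / ((2 * p).factorial : ℝ) *
          ((ω ^ 2 + a ^ 2) ^ (p + 1))⁻¹ : ℝ) : ℂ) := by
  set z : ℂ := (a:ℂ) + Complex.I * ω with hzdef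
  set w : ℂ := (a:ℂ) - Complex.I * ω with hwdef
  have hz : 0 < z.re := by simp [hzdef, ha]
  have hw : 0 < w.re := by simp [hwdef, ha]
  have hz0 : z ≠ 0 := by intro h; rw [h] at hz; simp at hz
  have hw0 : w ≠ 0 := by intro h; rw [h] at hw; simp at hw
  have hzw : z * w = ((ω^2 + a^2 : ℝ) : ℂ) := by
    rw [hzdef, hwdef]
    push_cast
    ring_nf
    rw [Complex.I_sq]
    ring
  have hzw2 : z + w = ((2*a : ℝ) : ℂ) := by rw [hzdef, hwdef]; push_cast; ring
  have hupos : (0:ℝ) < ω^2 + a^2 := by positivity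
  have hzw0 : z * w ≠ 0 := mul_ne_zero hz0 hw0
  -- pointwise rewriting of the integrand as a finite sum
  have hpt : ∀ τ : ℝ, (maternKernel p a τ : ℂ) * Complex.exp (-Complex.I * ω * τ)
      = ∑ i ∈ Finset.range (p+1),
          (((p.factorial : ℝ) / ((2*p).factorial : ℝ)
            * (((p+i).factorial : ℝ) / ((i.factorial : ℝ) * ((p-i).factorial : ℝ)))
            * (2*a)^(p-i) : ℝ) : ℂ)
          * ((( |τ|^(p-i) * Real.exp (-a*|τ|) : ℝ) : ℂ) * Complex.exp (-Complex.I * ω * τ)) := by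
    intro τ
    rw [maternKernel]
    push_cast
    rw [Finset.mul_sum, Finset.sum_mul]
    apply Finset.sum_congr rfl
    intro i _
    rw [mul_pow]
    ring
  rw [show (fun τ : ℝ => (maternKernel p a τ : ℂ) * Complex.exp (-Complex.I * ω * τ))
      = fun τ : ℝ => ∑ i ∈ Finset.range (p+1),
          (((p.factorial : ℝ) / ((2*p).factorial : ℝ)
            * (((p+i).factorial : ℝ) / ((i.factorial : ℝ) * ((p-i).factorial : ℝ)))
            * (2*a)^(p-i) : ℝ) : ℂ)
          * ((( |τ|^(p-i) * Real.exp (-a*|τ|) : ℝ) : ℂ) * Complex.exp (-Complex.I * ω * τ))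
      from funext hpt]
  rw [MeasureTheory.integral_finset_sum _
    (fun i _ => ((lineIntegrable (p-i) ha ω).const_mul _))]
  have hint : ∀ i ∈ Finset.range (p+1),
      (∫ τ : ℝ, (((p.factorial : ℝ) / ((2*p).factorial : ℝ)
            * (((p+i).factorial : ℝ) / ((i.factorial : ℝ) * ((p-i).factorial : ℝ)))
            * (2*a)^(p-i) : ℝ) : ℂ)
          * ((( |τ|^(p-i) * Real.exp (-a*|τ|) : ℝ) : ℂ) * Complex.exp (-Complex.I * ω * τ)))
      = (((p.factorial : ℝ) / ((2*p).factorial : ℝ)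
            * (((p+i).factorial : ℝ) / ((i.factorial : ℝ) * ((p-i).factorial : ℝ)))
            * (2*a)^(p-i) : ℝ) : ℂ)
        * (((p-i).factorial : ℂ) / z ^ ((p-i)+1) + ((p-i).factorial : ℂ) / w ^ ((p-i)+1)) := by
    intro i _
    rw [MeasureTheory.integral_const_mul, lineInt (p-i) ha ω]
  rw [Finset.sum_congr rfl hint]
  -- now pure algebra
  have key := keyId p z w
  apply mul_right_cancel₀ (pow_ne_zero (p+1) hzw0)
  have hR : (((2 * a) ^ (2 * p + 1) * (p.factorial : ℝ) ^ 2 / ((2 * p).factorial : ℝ) *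
          ((ω ^ 2 + a ^ 2) ^ (p + 1))⁻¹ : ℝ) : ℂ) * (z*w)^(p+1)
      = (((2 * a) ^ (2 * p + 1) * (p.factorial : ℝ) ^ 2 / ((2 * p).factorial : ℝ) : ℝ) : ℂ) := by
    rw [hzw, ← Complex.ofReal_pow, ← Complex.ofReal_mul]
    congr 1
    field_simp
  rw [hR, Finset.sum_mul]
  have hterm : ∀ i ∈ Finset.range (p+1),
      ((((p.factorial : ℝ) / ((2*p).factorial : ℝ)
            * (((p+i).factorial : ℝ) / ((i.factorial : ℝ) * ((p-i).factorial : ℝ)))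
            * (2*a)^(p-i) : ℝ) : ℂ)
        * (((p-i).factorial : ℂ) / z ^ ((p-i)+1) + ((p-i).factorial : ℂ) / w ^ ((p-i)+1)))
        * (z*w)^(p+1)
      = ((p.factorial : ℂ) * (p.factorial : ℂ) / ((2*p).factorial : ℂ))
        * ((((p+i).choose i : ℕ) : ℂ) * (z+w)^(p-i) * (w^(p+1) * z^i + z^(p+1) * w^i)) := by
    intro i hi
    simp only [Finset.mem_range] at hi
    have hip : i ≤ p := by omega
    have hiz : z^(p+1) = z^((p-i)+1) * z^i := by rw [← pow_add]; congr 1; omega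
    have hiw : w^(p+1) = w^((p-i)+1) * w^i := by rw [← pow_add]; congr 1; omega
    have hfact : (((p+i).choose i : ℕ) : ℂ) * (i.factorial : ℂ) * (p.factorial : ℂ)
        = ((p+i).factorial : ℂ) := by
      have := Nat.choose_mul_factorial_mul_factorial (show i ≤ p + i by omega)
      rw [show p + i - i = p from by omega] at this
      exact_mod_cast this
    have h2a : (2:ℂ) * (a:ℂ) = z + w := by rw [hzw2]; push_cast; ring
    have hf1 : (i.factorial : ℂ) ≠ 0 := Nat.cast_ne_zero.mpr (Nat.factorial_ne_zero _)
    have hf2 : ((p-i).factorial : ℂ) ≠ 0 := Nat.cast_ne_zero.mpr (Nat.factorial_ne_zero _)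
    have hf3 : (((2*p).factorial : ℕ) : ℂ) ≠ 0 := Nat.cast_ne_zero.mpr (Nat.factorial_ne_zero _)
    push_cast
    rw [← hfact, mul_pow (z) w (p+1), hiz, hiw, h2a]
    field_simp
  rw [Finset.sum_congr rfl hterm, ← Finset.mul_sum, key, hzw2]
  push_cast
  field_simp
end

section
/- Let p ∈ ℕ, a > 0, b ∈ ℝ. The Hida-Matérn kernel k_{H,p}(τ; a, b) = cos(bτ) · m_p(τ; a) is a positive-definite function on ℝ: for every n ∈ ℕ, every choice of points t₁, …, tₙ ∈ ℝ, and every choice of real coefficients c₁, …, cₙ, we have Σ_{i=1}^{n} Σ_{j=1}^{n} c_i c_j k_{H,p}(t_i − t_j; a, b) ≥ 0. -/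
open MeasureTheory Real

/-- The Hida-Matérn kernel with smoothness `p`, inverse length-scale `a`,
and frequency shift `b`. -/
noncomputable def hidaMaternKernel (p : ℕ) (a b : ℝ) (τ : ℝ) : ℝ :=
  Real.cos (b * τ) * maternKernel p a τ

namespace HidaMaternAux

open Set

lemma integrableOn_pow_exp (n : ℕ) {c : ℝ} (hc : 0 < c) :
    IntegrableOn (fun u : ℝ => u ^ n * Real.exp (-(c * u))) (Ioi 0) := by
  have h := integrableOn_rpow_mul_exp_neg_mul_rpow (s := (n : ℝ)) (p := 1)
    (lt_of_lt_of_le neg_one_lt_zero (Nat.cast_nonneg n)) one_pos hc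
  refine h.congr_fun (fun x hx => ?_) measurableSet_Ioi
  beta_reduce
  rw [Real.rpow_natCast, Real.rpow_one, neg_mul]

lemma integral_pow_exp (n : ℕ) {c : ℝ} (hc : 0 < c) :
    ∫ u in Ioi (0:ℝ), u ^ n * Real.exp (-(c * u)) = n.factorial / c ^ (n + 1) := by
  have h := integral_rpow_mul_exp_neg_mul_Ioi (a := (n : ℝ) + 1) (r := c) (by positivity) hc
  have h2 : ∀ t : ℝ, t ^ ((n : ℝ) + 1 - 1) = t ^ n := by
    intro t; rw [add_sub_cancel_right, Real.rpow_natCast]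
  simp only [h2] at h
  rw [h, Real.Gamma_nat_eq_factorial,
    show ((n : ℝ) + 1) = ((n + 1 : ℕ) : ℝ) by push_cast; ring, Real.rpow_natCast]
  rw [div_pow, one_pow]
  ring

/-- Feature function whose autocorrelation is the Matérn kernel. -/
noncomputable def featFn (p : ℕ) (a : ℝ) (u : ℝ) : ℝ :=
  if 0 ≤ u then u ^ p * Real.exp (-(a * u)) else 0

lemma featFn_mul (p : ℕ) (a : ℝ) {w : ℝ} (hw : 0 ≤ w) (u : ℝ) :
    featFn p a u * featFn p a (u + w) =
    (Ici (0:ℝ)).indicator (fun v => ∑ j ∈ Finset.range (p+1),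
      ((p.choose j : ℝ) * w^(p-j) * Real.exp (-(a*w))) *
        (v^(p+j) * Real.exp (-(2*a*v)))) u := by
  unfold featFn
  rw [Set.indicator_apply]
  by_cases hu : 0 ≤ u
  · rw [if_pos hu, if_pos (by linarith), if_pos (mem_Ici.mpr hu), add_pow,
      Finset.sum_mul, Finset.mul_sum]
    refine Finset.sum_congr rfl fun j hj => ?_
    have he : Real.exp (-(a * u)) * Real.exp (-(a * (u + w))) =
        Real.exp (-(a * w)) * Real.exp (-(2 * a * u)) := by
      rw [← Real.exp_add, ← Real.exp_add]; ring_nf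
    have hp : u ^ p * u ^ j = u ^ (p + j) := by rw [pow_add]
    calc u ^ p * Real.exp (-(a * u)) * (u ^ j * w ^ (p - j) * (p.choose j : ℝ) *
          Real.exp (-(a * (u + w))))
        = (u ^ p * u ^ j) * (w ^ (p - j) * (p.choose j : ℝ)) *
          (Real.exp (-(a * u)) * Real.exp (-(a * (u + w)))) := by ring
      _ = _ := by rw [he, hp]; ring
  · rw [if_neg hu, if_neg (fun h => hu (mem_Ici.mp h)), zero_mul]

lemma key_integral (p : ℕ) {a : ℝ} (ha : 0 < a) {w : ℝ} (hw : 0 ≤ w) :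
    ∫ u : ℝ, featFn p a u * featFn p a (u + w) =
    ∑ j ∈ Finset.range (p+1), (p.choose j : ℝ) * w^(p-j) * Real.exp (-(a*w)) *
      ((p+j).factorial / (2*a)^(p+j+1)) := by
  have h2a : (0:ℝ) < 2 * a := by positivity
  simp_rw [featFn_mul p a hw]
  rw [integral_indicator measurableSet_Ici, integral_Ici_eq_integral_Ioi,
    integral_finset_sum _ (fun j _ => ((integrableOn_pow_exp (p+j) h2a).const_mul _))]
  refine Finset.sum_congr rfl fun j _ => ?_
  rw [MeasureTheory.integral_const_mul, integral_pow_exp (p+j) h2a]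

lemma integrable_featFn_mul_nonneg (p : ℕ) {a : ℝ} (ha : 0 < a) {w : ℝ} (hw : 0 ≤ w) :
    Integrable (fun u => featFn p a u * featFn p a (u + w)) := by
  have h2a : (0:ℝ) < 2 * a := by positivity
  rw [funext (featFn_mul p a hw), integrable_indicator_iff measurableSet_Ici]
  have h : IntegrableOn (fun v : ℝ => ∑ j ∈ Finset.range (p+1),
      ((p.choose j : ℝ) * w^(p-j) * Real.exp (-(a*w))) *
        (v^(p+j) * Real.exp (-(2*a*v)))) (Ioi 0) :=
    integrable_finset_sum _ (fun j _ => ((integrableOn_pow_exp (p+j) h2a).const_mul _))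
  exact h.congr_set_ae (MeasureTheory.Ioi_ae_eq_Ici (a := (0:ℝ))).symm

lemma integrable_featFn_mul (p : ℕ) {a : ℝ} (ha : 0 < a) (τ : ℝ) :
    Integrable (fun u => featFn p a u * featFn p a (u + τ)) := by
  rcases le_or_gt 0 τ with h | h
  · exact integrable_featFn_mul_nonneg p ha h
  · have h0 : (0:ℝ) ≤ -τ := by linarith
    have hg := (integrable_featFn_mul_nonneg p ha h0).comp_add_right τ
    refine hg.congr (Filter.Eventually.of_forall fun u => ?_)
    have hsimp : u + τ + -τ = u := by ring
    simp only [hsimp]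
    ring

lemma k_symm (p : ℕ) (a : ℝ) (τ : ℝ) :
    ∫ u : ℝ, featFn p a u * featFn p a (u + τ)
      = ∫ u : ℝ, featFn p a u * featFn p a (u + (-τ)) := by
  rw [← MeasureTheory.integral_add_right_eq_self
      (fun x => featFn p a x * featFn p a (x + τ)) (-τ)]
  congr 1
  funext x
  have hsimp : x + -τ + τ = x := by ring
  rw [hsimp]
  ring

lemma k_abs (p : ℕ) (a : ℝ) (τ : ℝ) :
    ∫ u : ℝ, featFn p a u * featFn p a (u + τ)
      = ∫ u : ℝ, featFn p a u * featFn p a (u + |τ|) := by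
  rcases abs_choice τ with h | h
  · rw [h]
  · rw [h, ← k_symm]

lemma matern_eq (p : ℕ) {a : ℝ} (ha : 0 < a) (τ : ℝ) :
    maternKernel p a τ = (2*a)^(2*p+1) / ((2*p).factorial : ℝ) *
      ∫ u : ℝ, featFn p a u * featFn p a (u + τ) := by
  rw [k_abs, key_integral p ha (abs_nonneg τ)]
  unfold maternKernel
  set w := |τ|
  rw [Finset.mul_sum, Finset.mul_sum]
  refine Finset.sum_congr rfl fun i hi => ?_
  have hle : i ≤ p := Nat.lt_succ_iff.mp (Finset.mem_range.mp hi)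
  have hA : (2*a) ≠ 0 := by positivity
  have hpow : (2*a)^(2*p+1) = (2*a)^(p-i) * (2*a)^(p+i+1) := by
    rw [← pow_add]; congr 1; omega
  have hch : (p.choose i : ℝ) = (p.factorial : ℝ) / ((i.factorial : ℝ) * ((p - i).factorial : ℝ)) :=
    Nat.cast_choose ℝ hle
  have hf1 : ((i.factorial : ℝ)) ≠ 0 := Nat.cast_ne_zero.mpr i.factorial_ne_zero
  have hf2 : (((p - i).factorial : ℝ)) ≠ 0 := Nat.cast_ne_zero.mpr (p - i).factorial_ne_zero
  have hf3 : (((2 * p).factorial : ℝ)) ≠ 0 := Nat.cast_ne_zero.mpr (2 * p).factorial_ne_zero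
  rw [mul_pow, hpow, hch, neg_mul]
  field_simp

lemma pair_eq (p : ℕ) (a : ℝ) (s t : ℝ) :
    ∫ v : ℝ, featFn p a (s - v) * featFn p a (t - v)
      = ∫ u : ℝ, featFn p a u * featFn p a (u + (s - t)) := by
  have h := MeasureTheory.integral_sub_left_eq_self
    (fun v => featFn p a (v + (s - t)) * featFn p a v) volume t
  have h1 : (∫ v : ℝ, featFn p a (t - v + (s - t)) * featFn p a (t - v))
      = ∫ v : ℝ, featFn p a (v + (s - t)) * featFn p a v := h
  have h2 : ∀ v : ℝ, t - v + (s - t) = s - v := fun v => by ring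
  simp only [h2] at h1
  rw [h1]
  congr 1
  funext u
  ring

end HidaMaternAux

open HidaMaternAux Set in
/-- The Hida-Matérn kernel is a positive-definite function on `ℝ`. -/
theorem hidaMatern_posDef (p : ℕ) (a b : ℝ) (ha : 0 < a) :
    ∀ (n : ℕ) (t : Fin n → ℝ) (c : Fin n → ℝ),
      0 ≤ ∑ i : Fin n, ∑ j : Fin n, c i * c j * hidaMaternKernel p a b (t i - t j) := by
  intro n t c
  set f : ℝ → ℝ := featFn p a with hf
  set C : ℝ := (2*a)^(2*p+1) / ((2*p).factorial : ℝ) with hCdef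
  have hC0 : 0 ≤ C := by positivity
  set F : Fin n → ℝ → ℝ := fun i v => c i * Real.cos (b * t i) * f (t i - v) with hF
  set G : Fin n → ℝ → ℝ := fun i v => c i * Real.sin (b * t i) * f (t i - v) with hG
  -- integrability of pairwise products
  have hbase : ∀ i j : Fin n, Integrable (fun v => f (t i - v) * f (t j - v)) := by
    intro i j
    have h1 : Integrable (fun x => f (x + (t i - t j)) * f x) := by
      refine (integrable_featFn_mul p ha (t i - t j)).congr
        (Filter.Eventually.of_forall fun u => ?_)
      ring
    have h2 := h1.comp_sub_left (t j)
    refine h2.congr (Filter.Eventually.of_forall fun v => ?_)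
    show f (t j - v + (t i - t j)) * f (t j - v) = f (t i - v) * f (t j - v)
    have h3 : t j - v + (t i - t j) = t i - v := by ring
    rw [h3]
  have hFint : ∀ i j : Fin n, Integrable (fun v => F i v * F j v + G i v * G j v) := by
    intro i j
    have h1 : (fun v => F i v * F j v + G i v * G j v) =
        fun v => (c i * Real.cos (b * t i) * (c j * Real.cos (b * t j))
          + c i * Real.sin (b * t i) * (c j * Real.sin (b * t j)))
            * (f (t i - v) * f (t j - v)) := by
      funext v; simp only [hF, hG]; ring
    rw [h1]
    exact (hbase i j).const_mul _
  -- each term is an integral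
  have hterm : ∀ i j : Fin n, c i * c j * hidaMaternKernel p a b (t i - t j)
      = C * ∫ v : ℝ, (F i v * F j v + G i v * G j v) := by
    intro i j
    have hI : (∫ v : ℝ, (F i v * F j v + G i v * G j v))
        = (c i * Real.cos (b * t i) * (c j * Real.cos (b * t j))
          + c i * Real.sin (b * t i) * (c j * Real.sin (b * t j)))
            * ∫ v : ℝ, f (t i - v) * f (t j - v) := by
      rw [← MeasureTheory.integral_const_mul]
      congr 1
      funext v
      simp only [hF, hG]
      ring
    rw [hI, pair_eq p a (t i) (t j)]
    rw [hidaMaternKernel, matern_eq p ha (t i - t j), ← hCdef]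
    rw [mul_sub, Real.cos_sub]
    ring
  rw [show (∑ i : Fin n, ∑ j : Fin n, c i * c j * hidaMaternKernel p a b (t i - t j))
      = C * ∑ i : Fin n, ∑ j : Fin n, ∫ v : ℝ, (F i v * F j v + G i v * G j v) by
    rw [Finset.mul_sum]
    refine Finset.sum_congr rfl fun i _ => ?_
    rw [Finset.mul_sum]
    exact Finset.sum_congr rfl fun j _ => hterm i j]
  refine mul_nonneg hC0 ?_
  have hswap : ∑ i : Fin n, ∑ j : Fin n, (∫ v : ℝ, (F i v * F j v + G i v * G j v))
      = ∫ v : ℝ, ∑ i : Fin n, ∑ j : Fin n, (F i v * F j v + G i v * G j v) := by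
    rw [integral_finset_sum _ (fun i _ => integrable_finset_sum _ (fun j _ => hFint i j))]
    exact Finset.sum_congr rfl fun i _ => (integral_finset_sum _ (fun j _ => hFint i j)).symm
  rw [hswap]
  refine integral_nonneg fun v => ?_
  have hexp : ∑ i : Fin n, ∑ j : Fin n, (F i v * F j v + G i v * G j v)
      = (∑ i : Fin n, F i v)^2 + (∑ i : Fin n, G i v)^2 := by
    rw [sq, sq, Finset.sum_mul_sum, Finset.sum_mul_sum, ← Finset.sum_add_distrib]
    exact Finset.sum_congr rfl fun i _ => Finset.sum_add_distrib
  rw [hexp]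
  positivity
end

section
/- Let p ∈ ℕ and a > 0 be fixed. For every even square-integrable function f ∈ L²(ℝ, ℝ) (i.e. f(−τ) = f(τ) almost everywhere) and every ε > 0, there exist L ∈ ℕ, real coefficients c₁, …, c_L, and frequencies b₁, …, b_L ∈ ℝ such that ‖ f − Σ_{i=1}^{L} c_i · k_{H,p}(·; a, b_i) ‖_{L²(ℝ)} < ε, where k_{H,p}(τ; a, b) = cos(bτ) · m_p(τ; a). That is, for any fixed p, the Hida-Matérn kernels are dense in the space of square-integrable stationary (even) kernels. -/
open MeasureTheory Set Real

lemma matern_continuous (p : ℕ) (a : ℝ) : Continuous (maternKernel p a) := by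
  unfold maternKernel
  fun_prop

lemma matern_even (p : ℕ) (a : ℝ) (τ : ℝ) : maternKernel p a (-τ) = maternKernel p a τ := by
  simp [maternKernel, abs_neg]

lemma matern_pos (p : ℕ) {a : ℝ} (ha : 0 < a) (τ : ℝ) : 0 < maternKernel p a τ := by
  unfold maternKernel
  apply mul_pos (mul_pos (Real.exp_pos _) _)
  · apply Finset.sum_pos' (fun i _ => by positivity)
    refine ⟨p, Finset.self_mem_range_succ p, ?_⟩
    simp only [Nat.sub_self, pow_zero, mul_one]
    positivity
  · positivity

lemma pow_le_exp_aux {x : ℝ} (hx : 0 ≤ x) (j : ℕ) : x ^ j ≤ j.factorial * Real.exp x := by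
  have h := Real.sum_le_exp_of_nonneg hx (j + 1)
  have h2 : x ^ j / j.factorial ≤ ∑ i ∈ Finset.range (j + 1), x ^ i / i.factorial := by
    apply Finset.single_le_sum (f := fun i => x ^ i / (i.factorial : ℝ))
      (fun i _ => by positivity) (Finset.self_mem_range_succ j)
  have hj : (0:ℝ) < j.factorial := by positivity
  calc x ^ j = (x ^ j / j.factorial) * j.factorial := by field_simp
  _ ≤ Real.exp x * j.factorial := by
      apply mul_le_mul_of_nonneg_right (h2.trans h) hj.le
  _ = j.factorial * Real.exp x := mul_comm _ _

lemma matern_decay (p : ℕ) {a : ℝ} (ha : 0 < a) :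
    ∃ K : ℝ, 0 < K ∧ ∀ τ : ℝ, maternKernel p a τ ≤ K * Real.exp (-(a/2) * |τ|) := by
  refine ⟨((p.factorial : ℝ) / ((2 * p).factorial : ℝ)) *
    (∑ i ∈ Finset.range (p + 1),
      (((p + i).factorial : ℝ) / ((i.factorial : ℝ) * ((p - i).factorial : ℝ))) *
        (4 ^ (p - i) * ((p - i).factorial : ℝ))) + 1, by positivity, fun τ => ?_⟩
  set t := |τ| with ht
  have ht0 : 0 ≤ t := abs_nonneg τ
  have key : ∀ j : ℕ, Real.exp (-a * t) * (2 * a * t) ^ j ≤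
      4 ^ j * (j.factorial : ℝ) * Real.exp (-(a/2) * t) := by
    intro j
    have h1 : (2 * a * t) ^ j ≤ 4 ^ j * (j.factorial : ℝ) * Real.exp ((a/2) * t) := by
      have : (2 * a * t) = 4 * ((a/2) * t) := by ring
      rw [this, mul_pow]
      have := pow_le_exp_aux (x := (a/2) * t) (by positivity) j
      calc (4:ℝ) ^ j * ((a/2) * t) ^ j ≤ 4 ^ j * ((j.factorial : ℝ) * Real.exp ((a/2)*t)) := by
            apply mul_le_mul_of_nonneg_left this (by positivity)
        _ = 4 ^ j * (j.factorial : ℝ) * Real.exp ((a/2) * t) := by ring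
    calc Real.exp (-a * t) * (2 * a * t) ^ j
        ≤ Real.exp (-a * t) * (4 ^ j * (j.factorial : ℝ) * Real.exp ((a/2) * t)) := by
          apply mul_le_mul_of_nonneg_left h1 (Real.exp_pos _).le
      _ = 4 ^ j * (j.factorial : ℝ) * (Real.exp (-a * t) * Real.exp ((a/2) * t)) := by ring
      _ = 4 ^ j * (j.factorial : ℝ) * Real.exp (-(a/2) * t) := by
          rw [← Real.exp_add]; ring_nf
  unfold maternKernel
  rw [← ht]
  have expand : Real.exp (-a * t) * ((p.factorial : ℝ) / ((2 * p).factorial : ℝ)) *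
      ∑ i ∈ Finset.range (p + 1),
        (((p + i).factorial : ℝ) / ((i.factorial : ℝ) * ((p - i).factorial : ℝ))) *
          (2 * a * t) ^ (p - i)
      = ((p.factorial : ℝ) / ((2 * p).factorial : ℝ)) *
      ∑ i ∈ Finset.range (p + 1),
        (((p + i).factorial : ℝ) / ((i.factorial : ℝ) * ((p - i).factorial : ℝ))) *
          (Real.exp (-a * t) * (2 * a * t) ^ (p - i)) := by
    rw [Finset.mul_sum, Finset.mul_sum]
    apply Finset.sum_congr rfl; intro i _; ring
  rw [expand]
  have hsum : ((p.factorial : ℝ) / ((2 * p).factorial : ℝ)) *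
      ∑ i ∈ Finset.range (p + 1),
        (((p + i).factorial : ℝ) / ((i.factorial : ℝ) * ((p - i).factorial : ℝ))) *
          (Real.exp (-a * t) * (2 * a * t) ^ (p - i))
      ≤ ((p.factorial : ℝ) / ((2 * p).factorial : ℝ)) *
      ∑ i ∈ Finset.range (p + 1),
        (((p + i).factorial : ℝ) / ((i.factorial : ℝ) * ((p - i).factorial : ℝ))) *
          ((4 ^ (p - i) * ((p - i).factorial : ℝ)) * Real.exp (-(a/2) * t)) := by
    apply mul_le_mul_of_nonneg_left _ (by positivity)
    apply Finset.sum_le_sum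
    intro i _
    apply mul_le_mul_of_nonneg_left _ (by positivity)
    have := key (p - i)
    linarith [this]
  refine hsum.trans ?_
  have step : ((p.factorial : ℝ) / ((2 * p).factorial : ℝ)) *
      ∑ i ∈ Finset.range (p + 1),
        (((p + i).factorial : ℝ) / ((i.factorial : ℝ) * ((p - i).factorial : ℝ))) *
          ((4 ^ (p - i) * ((p - i).factorial : ℝ)) * Real.exp (-(a/2) * t))
      = (((p.factorial : ℝ) / ((2 * p).factorial : ℝ)) *
      ∑ i ∈ Finset.range (p + 1),
        (((p + i).factorial : ℝ) / ((i.factorial : ℝ) * ((p - i).factorial : ℝ))) *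
          (4 ^ (p - i) * ((p - i).factorial : ℝ))) * Real.exp (-(a/2) * t) := by
    rw [Finset.mul_sum, Finset.mul_sum, Finset.sum_mul]
    apply Finset.sum_congr rfl; intro i _; ring
  rw [step]
  apply mul_le_mul_of_nonneg_right _ (Real.exp_pos _).le
  linarith [Finset.sum_nonneg (fun i (_ : i ∈ Finset.range (p+1)) =>
    mul_nonneg (by positivity : (0:ℝ) ≤ ((p + i).factorial : ℝ) / ((i.factorial : ℝ) * ((p - i).factorial : ℝ)))
      (by positivity : (0:ℝ) ≤ (4:ℝ) ^ (p - i) * ((p - i).factorial : ℝ)))]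

lemma integrable_exp_neg_abs {b : ℝ} (hb : 0 < b) :
    Integrable (fun x : ℝ => Real.exp (-b * |x|)) volume := by
  have h2 : IntegrableOn (fun x : ℝ => Real.exp (-b * |x|)) (Set.Ioi 0) volume := by
    apply (exp_neg_integrableOn_Ioi 0 hb).congr_fun _ measurableSet_Ioi
    intro x hx
    show Real.exp (-b * x) = Real.exp (-b * |x|)
    rw [abs_of_pos hx]
  rw [← integrableOn_univ, ← @Iio_union_Ici _ _ (0 : ℝ), integrableOn_union,
    integrableOn_Ici_iff_integrableOn_Ioi]
  refine ⟨?_, h2⟩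
  rw [← (Measure.measurePreserving_neg (volume : Measure ℝ)).integrableOn_comp_preimage
      (Homeomorph.neg ℝ).measurableEmbedding]
  simp only [Function.comp_def, abs_neg, neg_preimage, neg_Iio, neg_neg, neg_zero]
  exact h2

lemma memL2_exp_neg_abs {b : ℝ} (hb : 0 < b) :
    MemLp (fun x : ℝ => Real.exp (-b * |x|)) 2 volume := by
  have hc : Continuous (fun x : ℝ => Real.exp (-b * |x|)) := by fun_prop
  rw [memLp_two_iff_integrable_sq hc.aestronglyMeasurable]
  have h : (fun x : ℝ => Real.exp (-b * |x|) ^ 2) = fun x : ℝ => Real.exp (-(2*b) * |x|) := by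
    ext x; rw [← Real.exp_nat_mul]; ring_nf
  rw [h]
  exact integrable_exp_neg_abs (by linarith)

noncomputable def cosF (R : ℝ) (k : ℕ) : C(Icc (0:ℝ) R, ℝ) :=
  ⟨fun t => Real.cos ((k : ℝ) * (π / R) * (t : ℝ)), by fun_prop⟩

lemma cos_span_approx {R : ℝ} (hR : 0 < R) (h : ℝ → ℝ) (hc : Continuous h)
    {δ : ℝ} (hδ : 0 < δ) :
    ∃ (n : ℕ) (c : Fin n → ℝ) (k : Fin n → ℕ),
      ∀ t ∈ Icc (0:ℝ) R, |(∑ i, c i * Real.cos ((k i : ℝ) * (π / R) * t)) - h t| < δ := by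
  set M : Submodule ℝ C(Icc (0:ℝ) R, ℝ) := Submodule.span ℝ (Set.range (cosF R)) with hM
  have h_one : (1 : C(Icc (0:ℝ) R, ℝ)) ∈ M := by
    have : cosF R 0 = 1 := by
      ext t; simp [cosF]
    rw [← this]
    exact Submodule.subset_span ⟨0, rfl⟩
  have key : ∀ j k : ℕ, cosF R j * cosF R k ∈ M := by
    have main : ∀ j k : ℕ, j ≤ k → cosF R j * cosF R k ∈ M := by
      intro j k hjk
      have : cosF R j * cosF R k =
          (2⁻¹ : ℝ) • cosF R (j + k) + (2⁻¹ : ℝ) • cosF R (k - j) := by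
        ext t
        show Real.cos ((j:ℝ) * (π / R) * t) * Real.cos ((k:ℝ) * (π / R) * t) =
          2⁻¹ * Real.cos (((j + k : ℕ):ℝ) * (π / R) * t) +
          2⁻¹ * Real.cos (((k - j : ℕ):ℝ) * (π / R) * t)
        have e1 : (((j + k : ℕ)):ℝ) * (π / R) * t =
            (k:ℝ) * (π / R) * t + (j:ℝ) * (π / R) * t := by push_cast; ring
        have e2 : (((k - j : ℕ)):ℝ) * (π / R) * t =
            (k:ℝ) * (π / R) * t - (j:ℝ) * (π / R) * t := by
          rw [Nat.cast_sub hjk]; ring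
        rw [e1, e2, Real.cos_add, Real.cos_sub]; ring
      rw [this]
      exact Submodule.add_mem M
        (Submodule.smul_mem M _ (Submodule.subset_span ⟨j + k, rfl⟩))
        (Submodule.smul_mem M _ (Submodule.subset_span ⟨k - j, rfl⟩))
    intro j k
    rcases le_total j k with hjk | hkj
    · exact main j k hjk
    · rw [mul_comm]; exact main k j hkj
  have h_mul : ∀ (x y : C(Icc (0:ℝ) R, ℝ)), x ∈ M → y ∈ M → x * y ∈ M := by
    have hle : M * M ≤ M := by
      rw [hM, Submodule.span_mul_span]
      rw [Submodule.span_le]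
      rintro z ⟨x, hx, y, hy, rfl⟩
      obtain ⟨j, rfl⟩ := hx
      obtain ⟨k, rfl⟩ := hy
      exact key j k
    intro x y hx hy
    exact hle (Submodule.mul_mem_mul hx hy)
  set A : Subalgebra ℝ C(Icc (0:ℝ) R, ℝ) := M.toSubalgebra h_one h_mul with hA
  have sep : A.SeparatesPoints := by
    intro x y hxy
    refine ⟨(cosF R 1 : C(Icc (0:ℝ) R, ℝ)), ⟨cosF R 1, Submodule.subset_span ⟨1, rfl⟩, rfl⟩, ?_⟩
    show Real.cos ((1:ℕ) * (π / R) * (x:ℝ)) ≠ Real.cos ((1:ℕ) * (π / R) * (y:ℝ))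
    intro hcontra
    apply hxy
    have hmem : ∀ z : Icc (0:ℝ) R, (1:ℕ) * (π / R) * (z:ℝ) ∈ Icc 0 π := by
      intro z
      obtain ⟨hz0, hzR⟩ := z.2
      constructor
      · have : (0:ℝ) ≤ π / R := by positivity
        push_cast
        nlinarith
      · push_cast
        have h1 : (π / R) * (z:ℝ) ≤ (π / R) * R := by
          apply mul_le_mul_of_nonneg_left hzR (by positivity)
        rw [div_mul_cancel₀] at h1
        · linarith
        · exact hR.ne'
    have := Real.injOn_cos (hmem x) (hmem y) (by simpa using hcontra)
    have hπR : π / R ≠ 0 := by positivity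
    ext
    field_simp at this
    linarith
  obtain ⟨g, hg⟩ := ContinuousMap.exists_mem_subalgebra_near_continuous_of_separatesPoints
    A sep (fun t : Icc (0:ℝ) R => h t) (hc.comp continuous_subtype_val) δ hδ
  have hgM : (g : C(Icc (0:ℝ) R, ℝ)) ∈ M := g.2
  rw [hM] at hgM
  obtain ⟨n, c, v, hsum⟩ := Submodule.mem_span_set'.mp hgM
  choose k hk using fun i => (v i).2
  refine ⟨n, c, k, fun t ht => ?_⟩
  have hgt := hg ⟨t, ht⟩
  rw [Real.norm_eq_abs] at hgt
  have heq : (∑ i, c i * Real.cos ((k i : ℝ) * (π / R) * t)) = (g : C(Icc (0:ℝ) R, ℝ)) ⟨t, ht⟩ := by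
    rw [← hsum]
    rw [ContinuousMap.coe_sum, Finset.sum_apply]
    apply Finset.sum_congr rfl
    intro i _
    have hvi : ((v i : C(Icc (0:ℝ) R, ℝ))) = cosF R (k i) := (hk i).symm
    rw [ContinuousMap.coe_smul, Pi.smul_apply, hvi]
    simp [cosF, smul_eq_mul]
  rw [heq]
  exact hgt

lemma cos_mul_abs (c τ : ℝ) : Real.cos (c * τ) = Real.cos (c * |τ|) := by
  rcases abs_cases τ with ⟨h, _⟩ | ⟨h, _⟩
  · rw [h]
  · rw [h, mul_neg, Real.cos_neg]

lemma cos_reduce {R : ℝ} (hR : 0 < R) (τ : ℝ) :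
    ∃ t ∈ Icc (0:ℝ) R, ∀ k : ℕ,
      Real.cos ((k:ℝ) * (π / R) * τ) = Real.cos ((k:ℝ) * (π / R) * t) := by
  set T : ℝ := 2 * R with hT
  have hT0 : 0 < T := by positivity
  set n : ℤ := round (τ / T) with hn
  set s : ℝ := τ - T * n with hs
  have hsabs : |s| ≤ R := by
    have h1 : s = T * (τ / T - n) := by
      field_simp [hs]
      exact hs
    rw [h1, abs_mul, abs_of_pos hT0]
    have := abs_sub_round (τ / T)
    calc T * |τ / T - ↑n| ≤ T * (1/2) := by
          apply mul_le_mul_of_nonneg_left _ hT0.le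
          rw [hn]; exact this
      _ = R := by rw [hT]; ring
  refine ⟨|s|, ⟨abs_nonneg _, hsabs⟩, fun k => ?_⟩
  have key : (k:ℝ) * (π / R) * τ = (k:ℝ) * (π / R) * s + ((k : ℤ) * n : ℤ) * (2 * π) := by
    rw [hs]
    push_cast
    field_simp
    ring
  rw [key, Real.cos_add_int_mul_two_pi, cos_mul_abs]

/-- Universality of the Hida-Matérn class: for fixed smoothness `p` and inverse
length-scale `a`, finite linear combinations of Hida-Matérn kernels are dense in
the space of square-integrable stationary (even) kernels. -/
theorem hidaMatern_universal (p : ℕ) (a : ℝ) (ha : 0 < a)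
    (f : ℝ → ℝ) (hf : MemLp f 2 (volume : Measure ℝ))
    (hf_even : ∀ᵐ τ : ℝ ∂(volume : Measure ℝ), f (-τ) = f τ)
    (ε : ℝ) (hε : 0 < ε) :
    ∃ (L : ℕ) (c : Fin L → ℝ) (b : Fin L → ℝ),
      eLpNorm (fun τ : ℝ => f τ - ∑ i : Fin L, c i * hidaMaternKernel p a (b i) τ)
        2 (volume : Measure ℝ) < ENNReal.ofReal ε := by
  classical
  set m := maternKernel p a with hm
  have hm_cont : Continuous m := matern_continuous p a
  have hm_pos : ∀ τ, 0 < m τ := matern_pos p ha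
  have hm_even : ∀ τ, m (-τ) = m τ := matern_even p a
  obtain ⟨K, hK, hKb⟩ := matern_decay p ha
  have hm_mem : MemLp m 2 (volume : Measure ℝ) := by
    apply MemLp.of_le ((memL2_exp_neg_abs (show (0:ℝ) < a/2 by linarith)).const_mul K)
      hm_cont.aestronglyMeasurable
    refine Filter.Eventually.of_forall (fun τ => ?_)
    rw [Real.norm_eq_abs, Real.norm_eq_abs, abs_of_pos (hm_pos τ)]
    exact (hKb τ).trans (le_abs_self _)
  have hW_mem : MemLp (fun x : ℝ => Real.exp (-(a/4) * |x|)) 2 (volume : Measure ℝ) :=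
    memL2_exp_neg_abs (by linarith)
  -- Step 1: continuous compactly supported approximation
  obtain ⟨g, g_supp, hfg, g_cont, -⟩ :=
    hf.exists_hasCompactSupport_eLpNorm_sub_le (p := 2) ENNReal.ofNat_ne_top
      (ε := ENNReal.ofReal (ε/8))
      (by rw [Ne, ENNReal.ofReal_eq_zero]; push_neg; linarith)
  obtain ⟨r, hr⟩ := g_supp.isBounded.subset_closedBall 0
  set R₀ : ℝ := |r| + 1 with hR₀
  have hgzero : ∀ τ : ℝ, R₀ ≤ |τ| → g τ = 0 := by
    intro τ hτ
    apply image_eq_zero_of_notMem_tsupport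
    intro hmem
    have h1 := hr hmem
    rw [Metric.mem_closedBall, Real.dist_eq, sub_zero] at h1
    have h2 : |τ| ≤ |r| := h1.trans (le_abs_self r)
    rw [hR₀] at hτ
    linarith
  set ge : ℝ → ℝ := fun τ => (g τ + g (-τ)) / 2 with hge
  have ge_cont : Continuous ge := by
    rw [hge]; fun_prop
  have ge_zero : ∀ τ : ℝ, R₀ ≤ |τ| → ge τ = 0 := by
    intro τ hτ
    rw [hge]
    simp only
    rw [hgzero τ hτ, hgzero (-τ) (by rwa [abs_neg])]
    ring
  have ge_even : ∀ τ, ge (-τ) = ge τ := by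
    intro τ; rw [hge]; simp only [neg_neg]; ring
  -- Step 2: eLpNorm (f - ge) ≤ ε/4
  have hu_meas : AEStronglyMeasurable (fun τ => f τ - g τ) (volume : Measure ℝ) :=
    hf.1.sub g_cont.aestronglyMeasurable
  have hcomp : eLpNorm ((fun τ => f τ - g τ) ∘ (Neg.neg : ℝ → ℝ)) 2 (volume : Measure ℝ)
      = eLpNorm (fun τ => f τ - g τ) 2 (volume : Measure ℝ) :=
    eLpNorm_comp_measurePreserving hu_meas (Measure.measurePreserving_neg _)
  have hu_meas' : AEStronglyMeasurable ((fun τ => f τ - g τ) ∘ (Neg.neg : ℝ → ℝ))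
      (volume : Measure ℝ) :=
    hu_meas.comp_measurePreserving (Measure.measurePreserving_neg _)
  have hfge : eLpNorm (fun τ => f τ - ge τ) 2 (volume : Measure ℝ) ≤ ENNReal.ofReal (ε/4) := by
    have hb : ∀ᵐ τ ∂(volume : Measure ℝ),
        ‖f τ - ge τ‖ ≤ (fun τ => ‖f τ - g τ‖ + ‖((fun τ => f τ - g τ) ∘ Neg.neg) τ‖) τ := by
      filter_upwards [hf_even] with τ hτ
      simp only [Function.comp_apply]
      have e : f τ - ge τ = ((f τ - g τ) + (f (-τ) - g (-τ)))/2 := by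
        rw [hge]; simp only; rw [← hτ]; ring
      rw [Real.norm_eq_abs, e]
      have h1 := abs_add_le (f τ - g τ) (f (-τ) - g (-τ))
      have h2 := abs_nonneg (f τ - g τ)
      have h3 := abs_nonneg (f (-τ) - g (-τ))
      rw [abs_div]
      rw [Real.norm_eq_abs, Real.norm_eq_abs]
      have : |(2:ℝ)| = 2 := by norm_num
      rw [this]
      linarith
    calc eLpNorm (fun τ => f τ - ge τ) 2 (volume : Measure ℝ)
        ≤ eLpNorm (fun τ => ‖f τ - g τ‖ + ‖((fun τ => f τ - g τ) ∘ Neg.neg) τ‖) 2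
            (volume : Measure ℝ) := eLpNorm_mono_ae_real hb
      _ ≤ eLpNorm (fun τ => ‖f τ - g τ‖) 2 (volume : Measure ℝ)
          + eLpNorm (fun τ => ‖((fun τ => f τ - g τ) ∘ Neg.neg) τ‖) 2 (volume : Measure ℝ) :=
          eLpNorm_add_le hu_meas.norm hu_meas'.norm one_le_two
      _ = eLpNorm (fun τ => f τ - g τ) 2 (volume : Measure ℝ)
          + eLpNorm ((fun τ => f τ - g τ) ∘ Neg.neg) 2 (volume : Measure ℝ) := by
          rw [eLpNorm_norm, eLpNorm_norm]
      _ ≤ ENNReal.ofReal (ε/8) + ENNReal.ofReal (ε/8) := by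
          rw [hcomp]; exact add_le_add hfg hfg
      _ = ENNReal.ofReal (ε/4) := by
          rw [← ENNReal.ofReal_add (by linarith) (by linarith)]; congr 1; ring
  -- Step 3: the ratio h = ge / m and its bound
  set h : ℝ → ℝ := fun τ => ge τ / m τ with hh
  have h_cont : Continuous h := ge_cont.div hm_cont (fun τ => (hm_pos τ).ne')
  have h_even : ∀ τ, h (-τ) = h τ := by
    intro τ; rw [hh]; simp only; rw [ge_even, hm_even]
  have h_mul : ∀ τ, h τ * m τ = ge τ := fun τ => div_mul_cancel₀ _ (hm_pos τ).ne'
  have h_zero : ∀ τ, R₀ ≤ |τ| → h τ = 0 := by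
    intro τ hτ; rw [hh]; simp only; rw [ge_zero τ hτ, zero_div]
  obtain ⟨C₀, hC₀⟩ :=
    (isCompact_Icc (a := -R₀) (b := R₀)).exists_bound_of_continuousOn h_cont.continuousOn
  set C : ℝ := max C₀ 0 with hC
  have hC0 : 0 ≤ C := le_max_right _ _
  have hCb : ∀ τ, |h τ| ≤ C := by
    intro τ
    rcases le_total (abs τ) R₀ with hle | hge2
    · have := hC₀ τ (abs_le.mp hle)
      rw [Real.norm_eq_abs] at this
      exact this.trans (le_max_left _ _)
    · rw [h_zero τ hge2, abs_zero]; exact hC0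
  -- Step 4: choose δ
  set Nm := eLpNorm m 2 (volume : Measure ℝ) with hNm
  have hNm_ne : Nm ≠ ⊤ := hm_mem.2.ne
  set NW := eLpNorm (fun x : ℝ => Real.exp (-(a/4) * |x|)) 2 (volume : Measure ℝ) with hNW
  have hNW_ne : NW ≠ ⊤ := hW_mem.2.ne
  have hNmtR : 0 ≤ Nm.toReal := ENNReal.toReal_nonneg
  have hNWtR : 0 ≤ NW.toReal := ENNReal.toReal_nonneg
  set δ : ℝ := min 1 ((ε/4) / (Nm.toReal + 1)) with hδdef
  have hδ : 0 < δ := lt_min one_pos (div_pos (by linarith) (by linarith [hNmtR]))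
  have hδ1 : δ ≤ 1 := min_le_left _ _
  have hδNm : ENNReal.ofReal δ * Nm ≤ ENNReal.ofReal (ε/4) := by
    conv_lhs => rw [← ENNReal.ofReal_toReal hNm_ne]
    rw [← ENNReal.ofReal_mul hδ.le]
    apply ENNReal.ofReal_le_ofReal
    have h1 : δ ≤ (ε/4) / (Nm.toReal + 1) := min_le_right _ _
    calc δ * Nm.toReal ≤ ((ε/4)/(Nm.toReal+1)) * Nm.toReal :=
          mul_le_mul_of_nonneg_right h1 hNmtR
      _ ≤ ε/4 := by
          rw [div_mul_eq_mul_div, div_le_iff₀ (by positivity)]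
          nlinarith
  -- Step 5: choose R
  have htend : Filter.Tendsto
      (fun R : ℝ => (C+1) * K * (NW.toReal + 1) * Real.exp (-(a/4) * R))
      Filter.atTop (nhds 0) := by
    have h1 : Filter.Tendsto (fun R : ℝ => (a/4) * R) Filter.atTop Filter.atTop :=
      Filter.Tendsto.const_mul_atTop (by positivity) Filter.tendsto_id
    have h2 := Real.tendsto_exp_neg_atTop_nhds_zero.comp h1
    have h3 := h2.const_mul ((C+1) * K * (NW.toReal + 1))
    rw [mul_zero] at h3
    convert h3 using 2 with R
    simp only [Function.comp_apply]
    rw [neg_mul]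
  have hev := (htend.eventually_le_const (show (0:ℝ) < ε/4 by linarith)).and
    ((Filter.eventually_ge_atTop R₀).and (Filter.eventually_gt_atTop 0))
  obtain ⟨R, hRbound, hRR₀, hRpos⟩ := hev.exists
  -- Step 6: Stone-Weierstrass approximation
  obtain ⟨L, c, k, happrox⟩ := cos_span_approx hRpos h h_cont hδ
  refine ⟨L, c, fun i => (k i : ℝ) * (π / R), ?_⟩
  set Q : ℝ → ℝ := fun τ => ∑ i, c i * Real.cos ((k i : ℝ) * (π / R) * τ) with hQ
  have hQcont : Continuous Q := by
    rw [hQ]; apply continuous_finset_sum; intro i _; fun_prop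
  have hfun : (fun τ : ℝ => f τ - ∑ i : Fin L, c i * hidaMaternKernel p a ((k i : ℝ) * (π / R)) τ)
      = fun τ => f τ - Q τ * m τ := by
    funext τ
    rw [hQ]
    simp only
    rw [Finset.sum_mul]
    congr 1
    apply Finset.sum_congr rfl
    intro i _
    simp only [hidaMaternKernel, hm]
    ring
  -- Step 7: pointwise bound
  set S : Set ℝ := {x : ℝ | R < |x|} with hS
  have hSmeas : MeasurableSet S := measurableSet_lt measurable_const continuous_abs.measurable
  have claim : ∀ τ : ℝ, ‖ge τ - Q τ * m τ‖ ≤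
      δ * m τ + S.indicator (fun x => (C + δ) * m x) τ := by
    intro τ
    rcases le_or_gt (abs τ) R with hcase | hcase
    · have hτIcc : |τ| ∈ Icc (0:ℝ) R := ⟨abs_nonneg _, hcase⟩
      have hQeq : Q τ = Q |τ| := by
        rw [hQ]; simp only
        apply Finset.sum_congr rfl; intro i _
        rw [cos_mul_abs]
      have h1 : |Q (abs τ) - h (abs τ)| < δ := happrox (abs τ) hτIcc
      have h2 : h (abs τ) = h τ := by
        rcases abs_cases τ with ⟨he, _⟩ | ⟨he, _⟩
        · rw [he]
        · rw [he, h_even]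
      have hind : S.indicator (fun x => (C + δ) * m x) τ = 0 := by
        apply Set.indicator_of_notMem
        rw [hS]; simp only [mem_setOf_eq, not_lt]; exact hcase
      rw [hind, add_zero, Real.norm_eq_abs]
      have e : ge τ - Q τ * m τ = (h τ - Q τ) * m τ := by
        rw [← h_mul τ]; ring
      rw [e, abs_mul, abs_of_pos (hm_pos τ)]
      apply mul_le_mul_of_nonneg_right _ (hm_pos τ).le
      rw [hQeq, ← h2]
      rw [abs_sub_comm]
      exact h1.le
    · have hge0 : ge τ = 0 := ge_zero τ (hRR₀.trans hcase.le)
      obtain ⟨t, htIcc, hteq⟩ := cos_reduce hRpos τ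
      have hQeq : Q τ = Q t := by
        rw [hQ]; simp only
        apply Finset.sum_congr rfl; intro i _
        rw [hteq]
      have hQb : |Q t| ≤ C + δ := by
        have ha1 := happrox t htIcc
        have ha2 := hCb t
        have : |Q t| ≤ |Q t - h t| + |h t| := by
          calc |Q t| = |(Q t - h t) + h t| := by ring_nf
            _ ≤ |Q t - h t| + |h t| := abs_add_le _ _
        linarith
      have hind : S.indicator (fun x => (C + δ) * m x) τ = (C + δ) * m τ := by
        apply Set.indicator_of_mem
        rw [hS]; exact hcase
      rw [hge0, hind, Real.norm_eq_abs, zero_sub, abs_neg, abs_mul, abs_of_pos (hm_pos τ)]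
      have hQτ : |Q τ| ≤ C + δ := by rw [hQeq]; exact hQb
      have := hm_pos τ
      nlinarith [abs_nonneg (Q τ)]
  -- Step 8: assemble eLpNorm bounds
  rw [hfun]
  have split : (fun τ : ℝ => f τ - Q τ * m τ)
      = (fun τ => f τ - ge τ) + fun τ => ge τ - Q τ * m τ := by
    funext τ; simp only [Pi.add_apply]; ring
  have meas1 : AEStronglyMeasurable (fun τ : ℝ => f τ - ge τ) (volume : Measure ℝ) :=
    hf.1.sub ge_cont.aestronglyMeasurable
  have meas2 : AEStronglyMeasurable (fun τ : ℝ => ge τ - Q τ * m τ) (volume : Measure ℝ) :=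
    (ge_cont.sub (hQcont.mul hm_cont)).aestronglyMeasurable
  have measInd : AEStronglyMeasurable (S.indicator (fun x => (C + δ) * m x))
      (volume : Measure ℝ) :=
    ((continuous_const.mul hm_cont).aestronglyMeasurable).indicator hSmeas
  have hsmul1 : eLpNorm (fun τ => δ * m τ) 2 (volume : Measure ℝ) = ENNReal.ofReal δ * Nm := by
    have e : (fun τ => δ * m τ) = δ • m := rfl
    rw [e, eLpNorm_const_smul, Real.enorm_eq_ofReal hδ.le, hNm]
  have hpt2 : ∀ τ : ℝ, ‖S.indicator (fun x => (C + δ) * m x) τ‖ ≤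
      ((C+1) * K * Real.exp (-(a/4) * R)) * Real.exp (-(a/4) * |τ|) := by
    intro τ
    by_cases hmem : τ ∈ S
    · rw [Set.indicator_of_mem hmem, Real.norm_eq_abs,
        abs_of_nonneg (mul_nonneg (by linarith : (0:ℝ) ≤ C + δ) (hm_pos τ).le)]
      have hτR : R ≤ |τ| := le_of_lt (by rw [hS] at hmem; exact hmem)
      have hmb := hKb τ
      have hexp : Real.exp (-(a/2) * |τ|)
          = Real.exp (-(a/4) * |τ|) * Real.exp (-(a/4) * |τ|) := by
        rw [← Real.exp_add]; ring_nf
      have hexp2 : Real.exp (-(a/4) * |τ|) ≤ Real.exp (-(a/4) * R) := by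
        apply Real.exp_le_exp.mpr
        nlinarith
      have he1 : (0:ℝ) ≤ Real.exp (-(a/4) * |τ|) := (Real.exp_pos _).le
      have hCδ : C + δ ≤ C + 1 := by linarith
      calc (C + δ) * m τ ≤ (C + 1) * m τ :=
            mul_le_mul_of_nonneg_right hCδ (hm_pos τ).le
        _ ≤ (C + 1) * (K * Real.exp (-(a/2) * |τ|)) := by
            apply mul_le_mul_of_nonneg_left hmb (by linarith)
        _ = (C + 1) * K * (Real.exp (-(a/4) * |τ|) * Real.exp (-(a/4) * |τ|)) := by
            rw [hexp]; ring
        _ ≤ (C + 1) * K * (Real.exp (-(a/4) * R) * Real.exp (-(a/4) * |τ|)) := by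
            apply mul_le_mul_of_nonneg_left _ (by positivity)
            exact mul_le_mul_of_nonneg_right hexp2 he1
        _ = ((C+1) * K * Real.exp (-(a/4) * R)) * Real.exp (-(a/4) * |τ|) := by ring
    · rw [Set.indicator_of_notMem hmem, norm_zero]
      positivity
  have hterm2 : eLpNorm (S.indicator (fun x => (C + δ) * m x)) 2 (volume : Measure ℝ)
      ≤ ENNReal.ofReal (ε/4) := by
    have hstep : eLpNorm (S.indicator (fun x => (C + δ) * m x)) 2 (volume : Measure ℝ)
        ≤ eLpNorm (fun τ : ℝ => ((C+1) * K * Real.exp (-(a/4) * R)) * Real.exp (-(a/4) * |τ|)) 2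
          (volume : Measure ℝ) := eLpNorm_mono_real hpt2
    have hsmul2 : eLpNorm
        (fun τ : ℝ => ((C+1) * K * Real.exp (-(a/4) * R)) * Real.exp (-(a/4) * |τ|)) 2
          (volume : Measure ℝ)
        = ENNReal.ofReal ((C+1) * K * Real.exp (-(a/4) * R)) * NW := by
      have e : (fun τ : ℝ => ((C+1) * K * Real.exp (-(a/4) * R)) * Real.exp (-(a/4) * |τ|))
          = ((C+1) * K * Real.exp (-(a/4) * R)) • (fun x : ℝ => Real.exp (-(a/4) * |x|)) := rfl
      rw [e, eLpNorm_const_smul, Real.enorm_eq_ofReal (by positivity), hNW]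
    refine hstep.trans ?_
    rw [hsmul2]
    conv_lhs => rw [← ENNReal.ofReal_toReal hNW_ne]
    rw [← ENNReal.ofReal_mul (by positivity)]
    apply ENNReal.ofReal_le_ofReal
    have hexp3 : (0:ℝ) < Real.exp (-(a/4) * R) := Real.exp_pos _
    nlinarith [hRbound]
  have hB : eLpNorm (fun τ : ℝ => ge τ - Q τ * m τ) 2 (volume : Measure ℝ)
      ≤ ENNReal.ofReal (ε/4) + ENNReal.ofReal (ε/4) := by
    calc eLpNorm (fun τ : ℝ => ge τ - Q τ * m τ) 2 (volume : Measure ℝ)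
        ≤ eLpNorm ((fun τ : ℝ => δ * m τ) + S.indicator (fun x => (C + δ) * m x)) 2
            (volume : Measure ℝ) := by
          apply eLpNorm_mono_real
          intro τ
          simpa using claim τ
      _ ≤ eLpNorm (fun τ : ℝ => δ * m τ) 2 (volume : Measure ℝ)
          + eLpNorm (S.indicator (fun x => (C + δ) * m x)) 2 (volume : Measure ℝ) :=
          eLpNorm_add_le (continuous_const.mul hm_cont).aestronglyMeasurable measInd one_le_two
      _ ≤ ENNReal.ofReal (ε/4) + ENNReal.ofReal (ε/4) := by
          apply add_le_add _ hterm2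
          rw [hsmul1]; exact hδNm
  calc eLpNorm (fun τ : ℝ => f τ - Q τ * m τ) 2 (volume : Measure ℝ)
      = eLpNorm ((fun τ : ℝ => f τ - ge τ) + fun τ : ℝ => ge τ - Q τ * m τ) 2
        (volume : Measure ℝ) := by rw [split]
    _ ≤ eLpNorm (fun τ : ℝ => f τ - ge τ) 2 (volume : Measure ℝ)
        + eLpNorm (fun τ : ℝ => ge τ - Q τ * m τ) 2 (volume : Measure ℝ) :=
        eLpNorm_add_le meas1 meas2 one_le_two
    _ ≤ ENNReal.ofReal (ε/4) + (ENNReal.ofReal (ε/4) + ENNReal.ofReal (ε/4)) :=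
        add_le_add hfge hB
    _ = ENNReal.ofReal (3*ε/4) := by
        rw [← ENNReal.ofReal_add (by linarith) (by linarith),
          ← ENNReal.ofReal_add (by linarith) (by linarith)]
        congr 1; ring
    _ < ENNReal.ofReal ε := (ENNReal.ofReal_lt_ofReal_iff hε).mpr (by linarith)
end

section
/- Let N = M + (N − M) and let K⁰ be a symmetric positive-definite real N×N matrix and K a real N×N matrix, partitioned conformally into blocks K⁰ = [[K⁰₀₀, K⁰₀₁], [K⁰₀₁ᵀ, K⁰₁₁]] and K = [[K₀₀, K₀₁], [K₁₀, K₁₁]] with K⁰₀₀, K₀₀ of size M×M. Define A = K (K⁰)⁻¹ with blocks [[A₀₀, A₀₁], [A₁₀, A₁₁]], Q = K⁰ − K (K⁰)⁻¹ Kᵀ with top-left block Q₀₀, and the Schur complement S = K⁰₁₁ − K⁰₀₁ᵀ (K⁰₀₀)⁻¹ K⁰₀₁ (which is invertible). Then the one-step marginalized transition matrix and noise covariance satisfy: (i) A₀₀ + A₀₁ K⁰₀₁ᵀ (K⁰₀₀)⁻¹ = K₀₀ (K⁰₀₀)⁻¹, and (ii) Q₀₀ + A₀₁ S A₀₁ᵀ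 = K⁰₀₀ − K₀₀ (K⁰₀₀)⁻¹ K₀₀ᵀ. -/
open Matrix


lemma posDef_of_fromBlocks {m n : Type*} [Fintype m] [Fintype n] [DecidableEq m] [DecidableEq n]
    {A : Matrix m m ℝ} {B : Matrix m n ℝ} {C : Matrix n m ℝ} {D : Matrix n n ℝ}
    (h : (Matrix.fromBlocks A B C D).PosDef) : A.PosDef := by
  constructor
  · have h1 := h.1
    rw [isHermitian_fromBlocks_iff] at h1
    exact h1.1
  · intro x hx
    exact (h.submatrix Sum.inl_injective).2 hx


/-- One-step marginalization of the higher-order block of an `N`-ple Markov state-space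
model depends only on the `K₀₀` block: the marginalized transition matrix equals
`K₀₀ (K⁰₀₀)⁻¹` and the marginalized noise covariance equals
`K⁰₀₀ − K₀₀ (K⁰₀₀)⁻¹ K₀₀ᵀ`. -/
theorem naive_marginalization (M M' : ℕ)
    (K000 : Matrix (Fin M) (Fin M) ℝ) (K001 : Matrix (Fin M) (Fin M') ℝ)
    (K011 : Matrix (Fin M') (Fin M') ℝ)
    (K00 : Matrix (Fin M) (Fin M) ℝ) (K01 : Matrix (Fin M) (Fin M') ℝ)
    (K10 : Matrix (Fin M') (Fin M) ℝ) (K11 : Matrix (Fin M') (Fin M') ℝ)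
    (K0 K : Matrix (Fin M ⊕ Fin M') (Fin M ⊕ Fin M') ℝ)
    (hK0 : K0 = Matrix.fromBlocks K000 K001 K001ᵀ K011)
    (hK : K = Matrix.fromBlocks K00 K01 K10 K11)
    (hK0posdef : K0.PosDef)
    (A Q : Matrix (Fin M ⊕ Fin M') (Fin M ⊕ Fin M') ℝ)
    (hA : A = K * K0⁻¹)
    (hQ : Q = K0 - K * K0⁻¹ * Kᵀ)
    (S : Matrix (Fin M') (Fin M') ℝ)
    (hS : S = K011 - K001ᵀ * K000⁻¹ * K001) :
    (A.toBlocks₁₁ + A.toBlocks₁₂ * K001ᵀ * K000⁻¹ = K00 * K000⁻¹) ∧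
    (Q.toBlocks₁₁ + A.toBlocks₁₂ * S * (A.toBlocks₁₂)ᵀ
      = K000 - K00 * K000⁻¹ * K00ᵀ) := by
  subst hK
  have hherm := hK0posdef.1
  rw [hK0, isHermitian_fromBlocks_iff] at hherm
  have h000T : K000ᵀ = K000 := by
    simpa [conjTranspose_eq_transpose_of_trivial, Matrix.IsSymm] using hherm.1
  have h011T : K011ᵀ = K011 := by
    simpa [conjTranspose_eq_transpose_of_trivial, Matrix.IsSymm] using hherm.2.2.2
  have h000pd : K000.PosDef := by
    rw [hK0] at hK0posdef; exact posDef_of_fromBlocks hK0posdef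
  haveI i000 : Invertible K000 := h000pd.isUnit.invertible
  haveI iK0 : Invertible K0 := hK0posdef.isUnit.invertible
  rw [hK0] at iK0
  haveI iS' : Invertible (K011 - K001ᵀ * ⅟K000 * K001) :=
    invertibleOfFromBlocks₁₁Invertible K000 K001 K001ᵀ K011
  haveI iS : Invertible S := by
    rw [hS, ← invOf_eq_nonsing_inv]; exact iS'
  have hSinv : S⁻¹ = (K011 - K001ᵀ * K000⁻¹ * K001)⁻¹ := by rw [hS]
  have hST : Sᵀ = S := by
    rw [hS]
    simp [transpose_sub, transpose_mul, transpose_nonsing_inv, h000T, h011T,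
      Matrix.transpose_transpose, Matrix.mul_assoc]
  -- inverse formula
  have hinv : (Matrix.fromBlocks K000 K001 K001ᵀ K011)⁻¹ =
      Matrix.fromBlocks (K000⁻¹ + K000⁻¹ * K001 * S⁻¹ * K001ᵀ * K000⁻¹)
        (-(K000⁻¹ * K001 * S⁻¹)) (-(S⁻¹ * K001ᵀ * K000⁻¹)) S⁻¹ := by
    rw [← invOf_eq_nonsing_inv, invOf_fromBlocks₁₁_eq]
    simp only [invOf_eq_nonsing_inv]
    rw [← hS]
  rw [hK0] at hA hQ
  subst hA hQ
  rw [hinv]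
  simp only [fromBlocks_transpose, fromBlocks_multiply, sub_eq_add_neg, fromBlocks_neg,
    fromBlocks_add, toBlocks_fromBlocks₁₁, toBlocks_fromBlocks₁₂, Matrix.mul_neg, Matrix.neg_mul]
  constructor
  · simp only [Matrix.add_mul, Matrix.mul_add, Matrix.mul_assoc, Matrix.mul_neg,
      Matrix.neg_mul]
    abel
  · have hEt : (K000⁻¹)ᵀ = K000⁻¹ := by rw [transpose_nonsing_inv, h000T]
    have hSt : (S⁻¹)ᵀ = S⁻¹ := by rw [transpose_nonsing_inv, hST]
    have h1 : S⁻¹ * S = 1 := inv_mul_of_invertible S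
    have hA12S : (-(K00 * (K000⁻¹ * K001 * S⁻¹)) + K01 * S⁻¹) * S
        = K01 - K00 * (K000⁻¹ * K001) := by
      simp only [Matrix.add_mul, Matrix.neg_mul, Matrix.mul_assoc, h1, Matrix.mul_one]
      abel
    rw [hA12S]
    simp only [transpose_add, transpose_neg, transpose_mul, transpose_nonsing_inv,
      h000T, hST, hEt, hSt]
    simp only [Matrix.mul_add, Matrix.add_mul, Matrix.mul_neg, Matrix.neg_mul,
      Matrix.sub_mul, Matrix.mul_sub, Matrix.mul_assoc, sub_eq_add_neg, neg_add, neg_neg]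
    abel
end

section
/- Let a > 0 and define k(τ) = (1 + aτ) e^{−aτ} (the Matérn 3/2 kernel on τ ≥ 0) and the 2×2 multi-output kernel matrix K^S(τ) with entries K^S(τ)_{ij} = (−1)^j k^{(i+j)}(τ) for i, j ∈ {0, 1}; explicitly K^S(τ) = [[(1 + aτ)e^{−aτ}, a²τ e^{−aτ}], [−a²τ e^{−aτ}, a²(1 − aτ)e^{−aτ}]] and K^S(0) = diag(1, a²). Then the transition matrices A(τ) = K^S(τ) K^S(0)⁻¹ form a semigroup on τ ≥ 0: for all τ, σ ≥ 0, K^S(τ + σ) K^S(0)⁻¹ = (K^S(τ) K^S(0)⁻¹)(K^S(σ) K^S(0)⁻¹). -/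
open Matrix Real

/-- The multi-output kernel matrix `K^S(τ)` of the state vector `(f, f')` for the
Matérn 3/2 kernel `k(τ) = (1 + aτ)e^{−aτ}`. -/
noncomputable def KS (a τ : ℝ) : Matrix (Fin 2) (Fin 2) ℝ :=
  !![(1 + a * τ) * Real.exp (-a * τ), a ^ 2 * τ * Real.exp (-a * τ);
     -(a ^ 2 * τ * Real.exp (-a * τ)), a ^ 2 * (1 - a * τ) * Real.exp (-a * τ)]

lemma KS_zero_inv (a : ℝ) (ha : 0 < a) :
    (KS a 0)⁻¹ = !![1, 0; 0, (a ^ 2)⁻¹] := by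
  have h : KS a 0 * !![1, 0; 0, (a ^ 2)⁻¹] = 1 := by
    simp [KS, Matrix.mul_fin_two, mul_inv_cancel₀ (pow_ne_zero 2 ha.ne')]
    rw [← Matrix.one_fin_two]
  exact inv_eq_right_inv h

/-- The transition matrices `A(τ) = K^S(τ) K^S(0)⁻¹` of the Matérn 3/2 state-space
model form a semigroup on `τ ≥ 0`. -/
theorem matern32_transition_semigroup (a : ℝ) (ha : 0 < a) :
    ∀ τ σ : ℝ, 0 ≤ τ → 0 ≤ σ →
      KS a (τ + σ) * (KS a 0)⁻¹
        = (KS a τ * (KS a 0)⁻¹) * (KS a σ * (KS a 0)⁻¹) := by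
  intro τ σ _ _
  rw [KS_zero_inv a ha]
  have ha' : (a : ℝ) ≠ 0 := ne_of_gt ha
  have hexp : Real.exp (-(a * (τ + σ))) = Real.exp (-(a * τ)) * Real.exp (-(a * σ)) := by
    rw [← Real.exp_add]; ring_nf
  ext i j
  fin_cases i <;> fin_cases j <;>
    simp [KS, Matrix.mul_fin_two, hexp] <;> field_simp <;> ring
end

section
/- Let σ > 0, ℓ > 0, ω₀ ∈ ℝ. Then for every τ ∈ ℝ, the periodic kernel admits the absolutely convergent cosine-series expansion σ² exp( (cos(ω₀τ) − 1) / ℓ² ) = σ² e^{−1/ℓ²} Σ_{q=0}^{∞} (1 / (q! ℓ^{2q} 2^q)) Σ_{v=0}^{q} C(q, v) cos( ω₀ (q − 2v) τ ). -/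
open Real

lemma cos_sum_eq (θ : ℝ) (q : ℕ) :
    ∑ v ∈ Finset.range (q + 1), (q.choose v : ℝ) * Real.cos (((q : ℝ) - 2 * v) * θ)
      = (2 * Real.cos θ) ^ q := by
  have h : (Complex.exp (θ * Complex.I) + Complex.exp (-(θ * Complex.I))) ^ q
      = ∑ v ∈ Finset.range (q + 1),
          Complex.exp (θ * Complex.I) ^ v * Complex.exp (-(θ * Complex.I)) ^ (q - v)
            * (q.choose v : ℂ) := add_pow _ _ _
  have h2 : ((2 : ℂ) * Complex.cos θ) ^ q
      = ∑ v ∈ Finset.range (q + 1),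
          (q.choose v : ℂ) * Complex.exp ((((2 * v - q : ℝ)) * θ : ℝ) * Complex.I) := by
    rw [Complex.two_cos, show -(θ:ℂ) * Complex.I = -((θ:ℂ) * Complex.I) from neg_mul _ _, h]
    refine Finset.sum_congr rfl fun v hv => ?_
    rw [Finset.mem_range] at hv
    rw [← Complex.exp_nat_mul, ← Complex.exp_nat_mul, ← Complex.exp_add]
    rw [mul_comm]
    congr 1
    have hvq : (v : ℂ) + (q - v : ℕ) = (q : ℂ) := by
      push_cast [Nat.cast_sub (Nat.lt_succ_iff.mp hv)]; ring
    push_cast [Nat.cast_sub (Nat.lt_succ_iff.mp hv)]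
    ring
  have := congrArg Complex.re h2
  rw [Complex.re_sum] at this
  calc ∑ v ∈ Finset.range (q + 1), (q.choose v : ℝ) * Real.cos (((q : ℝ) - 2 * v) * θ)
      = ∑ v ∈ Finset.range (q + 1),
          ((q.choose v : ℂ) * Complex.exp ((((2 * v - q : ℝ)) * θ : ℝ) * Complex.I)).re := by
        refine Finset.sum_congr rfl fun v hv => ?_
        rw [show ((q.choose v : ℂ) * Complex.exp ((((2 * v - q : ℝ)) * θ : ℝ) * Complex.I)).re
            = (q.choose v : ℝ) * Real.cos ((2 * v - q : ℝ) * θ) by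
          rw [Complex.mul_re, Complex.exp_ofReal_mul_I_re, Complex.exp_ofReal_mul_I_im]
          simp]
        rw [show ((2 * v - q : ℝ)) * θ = -(((q : ℝ) - 2 * v) * θ) by ring, Real.cos_neg]
    _ = (((2 : ℂ) * Complex.cos θ) ^ q).re := this.symm
    _ = (2 * Real.cos θ) ^ q := by
        rw [← Complex.ofReal_cos]
        norm_cast

/-- The periodic kernel `σ² exp((cos(ω₀τ) − 1)/ℓ²)` admits an absolutely convergent
cosine-series expansion. -/
theorem periodic_kernel_cosine_series (σ ℓ ω₀ : ℝ) (hσ : 0 < σ) (hℓ : 0 < ℓ) (τ : ℝ) :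
    HasSum
      (fun q : ℕ =>
        σ ^ 2 * Real.exp (-(1 / ℓ ^ 2)) *
          (1 / ((q.factorial : ℝ) * ℓ ^ (2 * q) * 2 ^ q)) *
            ∑ v ∈ Finset.range (q + 1),
              (q.choose v : ℝ) * Real.cos (ω₀ * ((q : ℝ) - 2 * v) * τ))
      (σ ^ 2 * Real.exp ((Real.cos (ω₀ * τ) - 1) / ℓ ^ 2)) := by
  set θ := ω₀ * τ with hθ
  have hx : HasSum (fun q : ℕ => (Real.cos θ / ℓ ^ 2) ^ q / q.factorial)
      (Real.exp (Real.cos θ / ℓ ^ 2)) := by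
    rw [Real.exp_eq_exp_ℝ]
    exact NormedSpace.expSeries_div_hasSum_exp _
  have hx' := hx.mul_left (σ ^ 2 * Real.exp (-(1 / ℓ ^ 2)))
  have heq : σ ^ 2 * Real.exp (-(1 / ℓ ^ 2)) * Real.exp (Real.cos θ / ℓ ^ 2)
      = σ ^ 2 * Real.exp ((Real.cos θ - 1) / ℓ ^ 2) := by
    rw [mul_assoc, ← Real.exp_add]
    congr 1
    field_simp
    ring
  rw [heq] at hx'
  convert hx' using 2 with q
  · rfl
  have hsum : ∑ v ∈ Finset.range (q + 1),
      (q.choose v : ℝ) * Real.cos (ω₀ * ((q : ℝ) - 2 * v) * τ)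
      = (2 * Real.cos θ) ^ q := by
    rw [← cos_sum_eq θ q]
    refine Finset.sum_congr rfl fun v _ => ?_
    rw [hθ]; ring_nf
  rw [hsum]
  have hℓ0 : (ℓ : ℝ) ≠ 0 := ne_of_gt hℓ
  have hf : (q.factorial : ℝ) ≠ 0 := Nat.cast_ne_zero.mpr q.factorial_ne_zero
  rw [mul_pow, pow_mul]
  field_simp
  ring
  rw [mul_assoc, ← mul_pow, mul_inv_cancel₀ hℓ0, one_pow, mul_one]
end

section
/- Let p ∈ ℕ, b ∈ ℝ, and τ ∈ ℝ be fixed. Then lim_{a → 0⁺} k_{H,p}(τ; a, b) = cos(bτ), where k_{H,p}(τ; a, b) = cos(bτ) · e^{−a|τ|} · (p!/(2p)!) · Σ_{i=0}^{p} ((p+i)!/(i!(p−i)!)) (2a|τ|)^{p−i}. That is, the cosine (spectral delta) kernel is the pointwise limit of Hida-Matérn kernels as the inverse length-scale a tends to zero. -/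
open Real Filter Topology

lemma maternKernel_zero (p : ℕ) (τ : ℝ) : maternKernel p 0 τ = 1 := by
  unfold maternKernel
  have hsum : ∑ i ∈ Finset.range (p + 1),
      (((p + i).factorial : ℝ) / ((i.factorial : ℝ) * ((p - i).factorial : ℝ))) *
        (2 * (0:ℝ) * |τ|) ^ (p - i)
      = ((2 * p).factorial : ℝ) / (p.factorial : ℝ) := by
    rw [Finset.sum_eq_single p]
    · simp [two_mul]
    · intro i hi hne
      have hlt : i < p := lt_of_le_of_ne (Nat.lt_succ_iff.mp (Finset.mem_range.mp hi)) hne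
      have : p - i ≠ 0 := Nat.sub_ne_zero_of_lt hlt
      simp [this]
    · intro h; exact absurd (Finset.self_mem_range_succ p) h
  rw [hsum]
  have h1 : ((2 * p).factorial : ℝ) ≠ 0 := Nat.cast_ne_zero.mpr (Nat.factorial_ne_zero _)
  have h2 : (p.factorial : ℝ) ≠ 0 := Nat.cast_ne_zero.mpr (Nat.factorial_ne_zero _)
  field_simp
  simp

/-- The cosine (spectral delta) kernel is the pointwise limit of Hida-Matérn kernels as
the inverse length-scale `a` tends to `0⁺`. -/
theorem hidaMatern_tendsto_cosine (p : ℕ) (b τ : ℝ) :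
    Filter.Tendsto (fun a : ℝ => hidaMaternKernel p a b τ)
      (nhdsWithin 0 (Set.Ioi 0)) (nhds (Real.cos (b * τ))) := by
  have hc : Continuous (fun a : ℝ => hidaMaternKernel p a b τ) := by
    unfold hidaMaternKernel maternKernel
    continuity
  have := hc.continuousAt (x := (0:ℝ))
  have h : Filter.Tendsto (fun a : ℝ => hidaMaternKernel p a b τ) (nhds 0)
      (nhds (hidaMaternKernel p 0 b τ)) := this
  rw [hidaMaternKernel, maternKernel_zero, mul_one] at h
  exact h.mono_left nhdsWithin_le_nhds
end

section
/- Let ℓ > 0 and τ ∈ ℝ be fixed, and for each p ∈ ℕ set a_p = √(2p + 1) / ℓ. Then the Matérn kernels of half-integer order converge pointwise to the squared-exponential kernel: lim_{p → ∞} m_p(τ; a_p) = exp( −τ² / (2ℓ²) ), where m_p(τ; a) = e^{−a|τ|} · (p!/(2p)!) · Σ_{i=0}^{p} ((p+i)!/(i!(p−i)!)) (2a|τ|)^{p−i}. -/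
open Real Filter Topology

section Aux
open MeasureTheory Set

lemma integrableOn_pow_exp (m : ℕ) {b : ℝ} (hb : 0 < b) :
    IntegrableOn (fun u : ℝ => u ^ m * Real.exp (-(b * u))) (Set.Ioi 0) := by
  have h := integrableOn_rpow_mul_exp_neg_mul_rpow (s := m) (p := 1) (b := b)
    (by exact_mod_cast neg_one_lt_zero.trans_le (Nat.cast_nonneg m)) zero_lt_one hb
  refine h.congr_fun (fun x hx => ?_) measurableSet_Ioi
  beta_reduce
  rw [Real.rpow_natCast, Real.rpow_one, neg_mul]

lemma integral_pow_exp (m : ℕ) {b : ℝ} (hb : 0 < b) :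
    ∫ u in Set.Ioi (0:ℝ), u ^ m * Real.exp (-(b * u)) = m.factorial / b ^ (m + 1) := by
  have h := Real.integral_rpow_mul_exp_neg_mul_Ioi (a := m + 1) (r := b) (by positivity) hb
  have h2 : ∫ u in Set.Ioi (0:ℝ), u ^ m * Real.exp (-(b * u))
      = ∫ t in Set.Ioi (0:ℝ), t ^ ((m : ℝ) + 1 - 1) * Real.exp (-(b * t)) :=
    setIntegral_congr_fun measurableSet_Ioi (fun t ht => by
      rw [add_sub_cancel_right, Real.rpow_natCast])
  rw [h2, h, Real.Gamma_nat_eq_factorial,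
    show ((m:ℝ)+1) = ((m+1 : ℕ):ℝ) by push_cast; ring, Real.rpow_natCast, one_div, inv_pow]
  field_simp

lemma integral_shift_pow_exp (m : ℕ) {b : ℝ} (hb : 0 < b) (ε : ℝ) :
    ∫ w in Set.Ioi ε, (w - ε) ^ m * Real.exp (-(b * w))
      = Real.exp (-(b * ε)) * (m.factorial / b ^ (m + 1)) := by
  have hmp : MeasurePreserving (· + ε) (volume : Measure ℝ) volume :=
    measurePreserving_add_right volume ε
  have hemb : MeasurableEmbedding (· + ε : ℝ → ℝ) :=
    (Homeomorph.addRight ε).measurableEmbedding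
  have := hmp.setIntegral_preimage_emb hemb
    (fun w => (w - ε) ^ m * Real.exp (-(b * w))) (Set.Ioi ε)
  rw [← this]
  have hpre : (· + ε : ℝ → ℝ) ⁻¹' Set.Ioi ε = Set.Ioi 0 := by
    ext x; simp
  rw [hpre]
  rw [show (fun u : ℝ => (u + ε - ε) ^ m * Real.exp (-(b * (u + ε))))
      = fun u : ℝ => Real.exp (-(b * ε)) * (u ^ m * Real.exp (-(b * u))) from funext fun u => by
        rw [add_sub_cancel_right, mul_add, neg_add, Real.exp_add]; ring]
  rw [integral_const_mul, integral_pow_exp m hb]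

lemma integrableOn_shift_pow_exp (m : ℕ) {b ε : ℝ} (hb : 0 < b) (hε : 0 ≤ ε) :
    IntegrableOn (fun w : ℝ => (w - ε) ^ m * Real.exp (-(b * w))) (Set.Ioi ε) := by
  refine Integrable.mono' ((integrableOn_pow_exp m hb).mono_set
    (Set.Ioi_subset_Ioi hε)) ?_ ?_
  · exact (Continuous.aestronglyMeasurable (by continuity)).restrict
  · refine (ae_restrict_iff' measurableSet_Ioi).2 (ae_of_all _ fun w hw => ?_)
    have h1 : (0:ℝ) ≤ w - ε := by simp at hw; linarith
    have h2 : w - ε ≤ w := by linarith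
    rw [Real.norm_eq_abs, abs_mul, abs_of_nonneg (pow_nonneg h1 m),
      abs_of_nonneg (Real.exp_pos _).le]
    exact mul_le_mul_of_nonneg_right (pow_le_pow_left₀ h1 h2 m) (Real.exp_pos _).le

lemma integrableOn_var (p : ℕ) {b : ℝ} (hb : 0 < b) :
    IntegrableOn (fun w : ℝ => w ^ (2*p) * (w-1)^2 * Real.exp (-(b * w))) (Set.Ioi 0) := by
  have hrw : (fun w : ℝ => w ^ (2*p) * (w-1)^2 * Real.exp (-(b * w)))
      = fun w : ℝ => w^(2*p+2)*Real.exp (-(b*w)) - 2*(w^(2*p+1)*Real.exp (-(b*w)))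
        + w^(2*p)*Real.exp (-(b*w)) := funext fun w => by ring
  rw [hrw]
  exact (((integrableOn_pow_exp (2*p+2) hb).sub
    ((integrableOn_pow_exp (2*p+1) hb).const_mul 2)).add (integrableOn_pow_exp (2*p) hb))

lemma integral_var (p : ℕ) :
    ∫ w in Set.Ioi (0:ℝ), w ^ (2*p) * (w-1)^2 * Real.exp (-((2*(p:ℝ)+1) * w))
      = ((2*p).factorial : ℝ) / (2*(p:ℝ)+1) ^ (2*p+2) := by
  set N : ℝ := 2*(p:ℝ)+1 with hN
  have hNpos : 0 < N := by positivity
  have hrw : ∀ w : ℝ, w ^ (2*p) * (w-1)^2 * Real.exp (-(N * w))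
      = w^(2*p+2)*Real.exp (-(N*w)) - 2*(w^(2*p+1)*Real.exp (-(N*w)))
        + w^(2*p)*Real.exp (-(N*w)) := fun w => by ring
  rw [setIntegral_congr_fun measurableSet_Ioi (fun w _ => hrw w)]
  have hi1 : IntegrableOn (fun w : ℝ => w^(2*p+2)*Real.exp (-(N*w))
      - 2*(w^(2*p+1)*Real.exp (-(N*w)))) (Set.Ioi 0) :=
    ((integrableOn_pow_exp (2*p+2) hNpos).sub
      ((integrableOn_pow_exp (2*p+1) hNpos).const_mul 2))
  have hi2 : IntegrableOn (fun w : ℝ => w^(2*p)*Real.exp (-(N*w))) (Set.Ioi 0) :=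
    integrableOn_pow_exp (2*p) hNpos
  rw [integral_add hi1 hi2,
    integral_sub (integrableOn_pow_exp (2*p+2) hNpos)
      ((integrableOn_pow_exp (2*p+1) hNpos).const_mul 2),
    integral_const_mul, integral_pow_exp _ hNpos, integral_pow_exp _ hNpos,
    integral_pow_exp _ hNpos]
  have h1 : ((2*p+2).factorial : ℝ) = (2*(p:ℝ)+2) * ((2*(p:ℝ)+1) * ((2*p).factorial : ℝ)) := by
    rw [show 2*p+2 = (2*p+1)+1 by ring, Nat.factorial_succ, Nat.factorial_succ]
    push_cast; ring
  have h2 : ((2*p+1).factorial : ℝ) = (2*(p:ℝ)+1) * ((2*p).factorial : ℝ) := by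
    rw [Nat.factorial_succ]; push_cast; ring
  rw [h1, h2]
  have hNe : N ≠ 0 := hNpos.ne'
  field_simp
  ring

lemma integrableOn_main (p : ℕ) {b ε : ℝ} (hb : 0 < b) (hε : 0 ≤ ε) :
    IntegrableOn (fun w : ℝ => (w^2-ε^2)^p * Real.exp (-(b*w))) (Set.Ioi ε) := by
  refine Integrable.mono' ((integrableOn_pow_exp (2*p) hb).mono_set
    (Set.Ioi_subset_Ioi hε)) ((Continuous.aestronglyMeasurable (by continuity)).restrict) ?_
  refine (ae_restrict_iff' measurableSet_Ioi).2 (ae_of_all _ fun w hw => ?_)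
  have hw' : ε < w := hw
  have h0 : 0 ≤ w^2 - ε^2 := by nlinarith
  rw [Real.norm_eq_abs, abs_mul, abs_of_nonneg (pow_nonneg h0 p),
    abs_of_nonneg (Real.exp_pos _).le]
  have h1 : (w^2-ε^2)^p ≤ w^(2*p) := by
    rw [pow_mul]; exact pow_le_pow_left₀ h0 (by nlinarith) p
  exact mul_le_mul_of_nonneg_right h1 (Real.exp_pos _).le

lemma bound_upper (p : ℕ) {ε δ : ℝ} (hε : 0 < ε) (hε4 : ε ≤ 1/4) (hδ : 0 < δ) (hδ2 : δ ≤ 1/2) :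
    (2*(p:ℝ)+1) ^ (2*p+1) / ((2*p).factorial : ℝ) *
      ∫ w in Set.Ioi ε, (w^2-ε^2)^p * Real.exp (-((2*(p:ℝ)+1)*w))
    ≤ (1 - ε^2/(1+δ)^2)^p + 1/((2*(p:ℝ)+1)*δ^2) := by
  set N : ℝ := 2*(p:ℝ)+1 with hNdef
  have hN : 0 < N := by positivity
  set H : ℝ := (1 - ε^2/(1+δ)^2)^p with hHdef
  have hHb : 0 ≤ 1 - ε^2/(1+δ)^2 := by
    have h1 : ε^2/(1+δ)^2 ≤ 1 := by
      rw [div_le_one (by positivity)]; nlinarith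
    linarith
  have hH0 : 0 ≤ H := pow_nonneg hHb p
  set φ : ℝ → ℝ := fun w => H * (w^(2*p) * Real.exp (-(N*w)))
      + w^(2*p) * (w-1)^2 * Real.exp (-(N*w)) / δ^2 with hφdef
  have hφint : IntegrableOn φ (Set.Ioi 0) :=
    ((integrableOn_pow_exp (2*p) hN).const_mul H).add ((integrableOn_var p hN).div_const _)
  have hφnonneg : ∀ w ∈ Set.Ioi (0:ℝ), 0 ≤ φ w := fun w hw => by
    have := (Real.exp_pos (-(N*w))).le
    have hw' : (0:ℝ) < w := hw
    positivity
  have hpt : ∀ w ∈ Set.Ioi ε, (w^2-ε^2)^p * Real.exp (-(N*w)) ≤ φ w := by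
    intro w hw
    have hw' : ε < w := hw
    have hwpos : 0 < w := lt_trans hε hw'
    have hbase : 0 ≤ w^2 - ε^2 := by nlinarith
    have hexp := (Real.exp_pos (-(N*w))).le
    have h5 : 0 ≤ w^(2*p) * (w-1)^2 * Real.exp (-(N*w)) / δ^2 := by positivity
    have h8 : 0 ≤ H * (w^(2*p) * Real.exp (-(N*w))) := by positivity
    rcases le_or_gt w (1+δ) with hcase | hcase
    · have hb2 : w^2 - ε^2 ≤ (1 - ε^2/(1+δ)^2) * w^2 := by
        rw [sub_mul, one_mul]
        have hw2 : w^2 ≤ (1+δ)^2 := by nlinarith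
        have h9 : ε^2/(1+δ)^2 * w^2 ≤ ε^2 := by
          rw [div_mul_eq_mul_div, div_le_iff₀ (by positivity)]
          nlinarith [mul_le_mul_of_nonneg_left hw2 (sq_nonneg ε)]
        linarith
      have h3 : (w^2-ε^2)^p ≤ ((1 - ε^2/(1+δ)^2) * w^2)^p := pow_le_pow_left₀ hbase hb2 p
      have h4 : ((1 - ε^2/(1+δ)^2) * w^2)^p = H * w^(2*p) := by
        rw [mul_pow, ← pow_mul]
      have h10 : (w^2-ε^2)^p * Real.exp (-(N*w)) ≤ H * (w^(2*p) * Real.exp (-(N*w))) := by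
        rw [← mul_assoc]
        exact mul_le_mul_of_nonneg_right (h4 ▸ h3) hexp
      rw [hφdef]; dsimp only; linarith
    · have h6 : (w^2-ε^2)^p ≤ w^(2*p) := by
        rw [pow_mul]; exact pow_le_pow_left₀ hbase (by nlinarith) p
      have h11 : (w^2-ε^2)^p * Real.exp (-(N*w)) ≤ w^(2*p) * Real.exp (-(N*w)) :=
        mul_le_mul_of_nonneg_right h6 hexp
      have h13 : (1:ℝ) ≤ (w-1)^2 * (δ^2)⁻¹ := by
        rw [← div_eq_mul_inv, le_div_iff₀ (by positivity), one_mul]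
        nlinarith
      have h12 : w^(2*p) * Real.exp (-(N*w)) ≤ w^(2*p) * (w-1)^2 * Real.exp (-(N*w)) / δ^2 :=
        calc w^(2*p) * Real.exp (-(N*w)) = (w^(2*p) * Real.exp (-(N*w))) * 1 := by ring
          _ ≤ (w^(2*p) * Real.exp (-(N*w))) * ((w-1)^2 * (δ^2)⁻¹) :=
            mul_le_mul_of_nonneg_left h13 (mul_nonneg (pow_nonneg hwpos.le (2*p)) hexp)
          _ = w^(2*p) * (w-1)^2 * Real.exp (-(N*w)) / δ^2 := by ring
      rw [hφdef]; dsimp only; linarith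
  have step1 : ∫ w in Set.Ioi ε, (w^2-ε^2)^p * Real.exp (-(N*w)) ≤ ∫ w in Set.Ioi ε, φ w :=
    setIntegral_mono_on (integrableOn_main p hN hε.le)
      (hφint.mono_set (Set.Ioi_subset_Ioi hε.le)) measurableSet_Ioi hpt
  have step2 : ∫ w in Set.Ioi ε, φ w ≤ ∫ w in Set.Ioi (0:ℝ), φ w :=
    setIntegral_mono_set hφint
      ((ae_restrict_iff' measurableSet_Ioi).2 (ae_of_all _ hφnonneg))
      ((Set.Ioi_subset_Ioi hε.le).eventuallyLE)
  have step3 : ∫ w in Set.Ioi (0:ℝ), φ w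
      = H * (((2*p).factorial : ℝ)/N^(2*p+1)) + (((2*p).factorial : ℝ)/N^(2*p+2))/δ^2 := by
    rw [hφdef]
    rw [integral_add ((integrableOn_pow_exp (2*p) hN).const_mul H)
      ((integrableOn_var p hN).div_const _), integral_const_mul, integral_div,
      integral_pow_exp _ hN, integral_var p]
  have hCpos : (0:ℝ) ≤ N^(2*p+1)/((2*p).factorial : ℝ) := by positivity
  have hfac : ((2*p).factorial : ℝ) ≠ 0 := Nat.cast_ne_zero.2 (Nat.factorial_ne_zero _)
  calc N^(2*p+1)/((2*p).factorial : ℝ) * ∫ w in Set.Ioi ε, (w^2-ε^2)^p * Real.exp (-(N*w))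
      ≤ N^(2*p+1)/((2*p).factorial : ℝ) * ∫ w in Set.Ioi (0:ℝ), φ w :=
        mul_le_mul_of_nonneg_left (step1.trans step2) hCpos
    _ = H + 1/(N*δ^2) := by
        rw [step3]
        field_simp
        ring

lemma bound_lower (p : ℕ) {ε δ : ℝ} (hε : 0 < ε) (hε4 : ε ≤ 1/4) (hδ : 0 < δ) (hδ2 : δ ≤ 1/2) :
    (1 - ε^2/(1-δ)^2)^p - 1/((2*(p:ℝ)+1)*δ^2)
    ≤ (2*(p:ℝ)+1) ^ (2*p+1) / ((2*p).factorial : ℝ) *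
      ∫ w in Set.Ioi ε, (w^2-ε^2)^p * Real.exp (-((2*(p:ℝ)+1)*w)) := by
  set N : ℝ := 2*(p:ℝ)+1 with hNdef
  have hN : 0 < N := by positivity
  have h1δ : (0:ℝ) < 1 - δ := by linarith
  set H : ℝ := (1 - ε^2/(1-δ)^2)^p with hHdef
  have hHb : 0 ≤ 1 - ε^2/(1-δ)^2 := by
    have h1 : ε^2/(1-δ)^2 ≤ 1 := by
      rw [div_le_one (by positivity)]; nlinarith
    linarith
  have hHb1 : 1 - ε^2/(1-δ)^2 ≤ 1 := by
    have : 0 ≤ ε^2/(1-δ)^2 := by positivity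
    linarith
  have hH0 : 0 ≤ H := pow_nonneg hHb p
  have hH1 : H ≤ 1 := pow_le_one₀ hHb hHb1
  set φ : ℝ → ℝ := fun w => H * (w^(2*p) * Real.exp (-(N*w)))
      - w^(2*p) * (w-1)^2 * Real.exp (-(N*w)) / δ^2 with hφdef
  have hφint : IntegrableOn φ (Set.Ioi 0) :=
    ((integrableOn_pow_exp (2*p) hN).const_mul H).sub ((integrableOn_var p hN).div_const _)
  -- φ ≤ 0 whenever w ≤ 1 - δ (and w ≥ 0)
  have hkey : ∀ w : ℝ, 0 ≤ w → w < 1 - δ → φ w ≤ 0 := by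
    intro w hw0 hwlt
    have hexp := (Real.exp_pos (-(N*w))).le
    have h13 : (1:ℝ) ≤ (w-1)^2 / δ^2 := by
      rw [le_div_iff₀ (by positivity), one_mul]
      nlinarith
    have hf0 : 0 ≤ w^(2*p) * Real.exp (-(N*w)) := mul_nonneg (pow_nonneg hw0 _) hexp
    have : H * (w^(2*p) * Real.exp (-(N*w))) ≤ w^(2*p) * (w-1)^2 * Real.exp (-(N*w)) / δ^2 :=
      calc H * (w^(2*p) * Real.exp (-(N*w))) ≤ 1 * (w^(2*p) * Real.exp (-(N*w))) :=
            mul_le_mul_of_nonneg_right hH1 hf0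
        _ = (w^(2*p) * Real.exp (-(N*w))) * 1 := by ring
        _ ≤ (w^(2*p) * Real.exp (-(N*w))) * ((w-1)^2 / δ^2) :=
            mul_le_mul_of_nonneg_left h13 hf0
        _ = w^(2*p) * (w-1)^2 * Real.exp (-(N*w)) / δ^2 := by ring
    rw [hφdef]; dsimp only; linarith
  have hpt : ∀ w ∈ Set.Ioi ε, φ w ≤ (w^2-ε^2)^p * Real.exp (-(N*w)) := by
    intro w hw
    have hw' : ε < w := hw
    have hwpos : 0 < w := lt_trans hε hw'
    have hbase : 0 ≤ w^2 - ε^2 := by nlinarith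
    have hexp := (Real.exp_pos (-(N*w))).le
    have h5 : 0 ≤ w^(2*p) * (w-1)^2 * Real.exp (-(N*w)) / δ^2 := by positivity
    rcases le_or_gt (1-δ) w with hcase | hcase
    · have hw2 : (1-δ)^2 ≤ w^2 := by nlinarith
      have hb2 : (1 - ε^2/(1-δ)^2) * w^2 ≤ w^2 - ε^2 := by
        rw [sub_mul, one_mul]
        have h9 : ε^2 ≤ ε^2/(1-δ)^2 * w^2 := by
          rw [div_mul_eq_mul_div, le_div_iff₀ (by positivity)]
          nlinarith [mul_le_mul_of_nonneg_left hw2 (sq_nonneg ε)]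
        linarith
      have h3 : ((1 - ε^2/(1-δ)^2) * w^2)^p ≤ (w^2-ε^2)^p :=
        pow_le_pow_left₀ (by positivity) hb2 p
      have h4 : ((1 - ε^2/(1-δ)^2) * w^2)^p = H * w^(2*p) := by
        rw [mul_pow, ← pow_mul]
      have h10 : H * (w^(2*p) * Real.exp (-(N*w))) ≤ (w^2-ε^2)^p * Real.exp (-(N*w)) := by
        rw [← mul_assoc]
        exact mul_le_mul_of_nonneg_right (h4 ▸ h3) hexp
      rw [hφdef]; dsimp only; linarith
    · have := hkey w hwpos.le hcase
      have hg0 : 0 ≤ (w^2-ε^2)^p * Real.exp (-(N*w)) :=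
        mul_nonneg (pow_nonneg hbase p) hexp
      linarith
  have hneg : ∫ w in Set.Ioc (0:ℝ) ε, φ w ≤ 0 := by
    refine setIntegral_nonpos measurableSet_Ioc fun w hw => ?_
    exact hkey w (le_of_lt hw.1) (by linarith [hw.2])
  have hsplit : ∫ w in Set.Ioi (0:ℝ), φ w
      = (∫ w in Set.Ioc (0:ℝ) ε, φ w) + ∫ w in Set.Ioi ε, φ w := by
    rw [← setIntegral_union (Set.Ioc_disjoint_Ioi le_rfl) measurableSet_Ioi
      (hφint.mono_set Set.Ioc_subset_Ioi_self) (hφint.mono_set (Set.Ioi_subset_Ioi hε.le)),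
      Set.Ioc_union_Ioi_eq_Ioi hε.le]
  have step1 : ∫ w in Set.Ioi (0:ℝ), φ w ≤ ∫ w in Set.Ioi ε, φ w := by
    rw [hsplit]; linarith
  have step2 : ∫ w in Set.Ioi ε, φ w ≤ ∫ w in Set.Ioi ε, (w^2-ε^2)^p * Real.exp (-(N*w)) :=
    setIntegral_mono_on (hφint.mono_set (Set.Ioi_subset_Ioi hε.le))
      (integrableOn_main p hN hε.le) measurableSet_Ioi hpt
  have step3 : ∫ w in Set.Ioi (0:ℝ), φ w
      = H * (((2*p).factorial : ℝ)/N^(2*p+1)) - (((2*p).factorial : ℝ)/N^(2*p+2))/δ^2 := by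
    rw [hφdef]
    rw [integral_sub ((integrableOn_pow_exp (2*p) hN).const_mul H)
      ((integrableOn_var p hN).div_const _), integral_const_mul, integral_div,
      integral_pow_exp _ hN, integral_var p]
  have hCpos : (0:ℝ) ≤ N^(2*p+1)/((2*p).factorial : ℝ) := by positivity
  have hfac : ((2*p).factorial : ℝ) ≠ 0 := Nat.cast_ne_zero.2 (Nat.factorial_ne_zero _)
  calc H - 1/(N*δ^2)
      = N^(2*p+1)/((2*p).factorial : ℝ) * ∫ w in Set.Ioi (0:ℝ), φ w := by
        rw [step3]
        field_simp
        ring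
    _ ≤ N^(2*p+1)/((2*p).factorial : ℝ) * ∫ w in Set.Ioi ε, (w^2-ε^2)^p * Real.exp (-(N*w)) :=
        mul_le_mul_of_nonneg_left (step1.trans step2) hCpos

lemma tendsto_pow_one_sub {u : ℕ → ℝ} {a : ℝ}
    (hu : Tendsto (fun p : ℕ => (p:ℝ) * u p) atTop (𝓝 a))
    (h0 : ∀ᶠ p in atTop, 0 ≤ u p) (h1 : ∀ᶠ p in atTop, u p ≤ 1/2) :
    Tendsto (fun p : ℕ => (1 - u p) ^ p) atTop (𝓝 (Real.exp (-a))) := by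
  have hu0 : Tendsto u atTop (𝓝 0) := by
    have h := hu.mul (tendsto_one_div_atTop_nhds_zero_nat)
    rw [mul_zero] at h
    refine h.congr' ?_
    filter_upwards [eventually_ge_atTop 1] with p hp
    have : (p:ℝ) ≠ 0 := Nat.cast_ne_zero.2 (by omega)
    field_simp
  -- lower and upper comparison sequences
  have hlow : Tendsto (fun p : ℕ => Real.exp (-((p:ℝ) * u p * (1 - u p)⁻¹))) atTop
      (𝓝 (Real.exp (-a))) := by
    have h1u : Tendsto (fun p : ℕ => (1 - u p)⁻¹) atTop (𝓝 1) := by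
      have : Tendsto (fun p : ℕ => 1 - u p) atTop (𝓝 1) := by
        simpa using (tendsto_const_nhds (x := (1:ℝ))).sub hu0
      simpa using this.inv₀ one_ne_zero
    have := (hu.mul h1u).neg
    rw [mul_one] at this
    exact (Real.continuous_exp.tendsto _).comp this
  have hhigh : Tendsto (fun p : ℕ => Real.exp (-((p:ℝ) * u p))) atTop (𝓝 (Real.exp (-a))) :=
    (Real.continuous_exp.tendsto _).comp hu.neg
  refine tendsto_of_tendsto_of_tendsto_of_le_of_le' hlow hhigh ?_ ?_
  · filter_upwards [h0, h1] with p hp0 hp1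
    have h1u : (0:ℝ) < 1 - u p := by linarith
    have key : Real.exp (-(u p * (1 - u p)⁻¹)) ≤ 1 - u p := by
      have he := Real.add_one_le_exp (u p * (1 - u p)⁻¹)
      have h2 : u p * (1 - u p)⁻¹ + 1 = (1 - u p)⁻¹ := by field_simp; ring
      rw [h2] at he
      rw [Real.exp_neg]
      have hepos : (0:ℝ) < Real.exp (u p * (1 - u p)⁻¹) := Real.exp_pos _
      have e1 : Real.exp (u p * (1 - u p)⁻¹) * (Real.exp (u p * (1 - u p)⁻¹))⁻¹ = 1 :=
        mul_inv_cancel₀ hepos.ne'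
      have e2 : (1 - u p) * (1 - u p)⁻¹ = 1 := mul_inv_cancel₀ h1u.ne'
      nlinarith [inv_nonneg.2 hepos.le]
    calc Real.exp (-((p:ℝ) * u p * (1 - u p)⁻¹))
        = Real.exp (-(u p * (1 - u p)⁻¹)) ^ p := by
          rw [← Real.exp_nat_mul]; ring_nf
      _ ≤ (1 - u p) ^ p := pow_le_pow_left₀ (Real.exp_pos _).le key p
  · filter_upwards [h0, h1] with p hp0 hp1
    calc (1 - u p) ^ p ≤ Real.exp (-(u p)) ^ p :=
          pow_le_pow_left₀ (by linarith) (by linarith [Real.add_one_le_exp (-(u p))]) p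
      _ = Real.exp (-((p:ℝ) * u p)) := by rw [← Real.exp_nat_mul]; ring_nf

lemma core_tendsto {t : ℝ} (ht : 0 < t) (ε : ℕ → ℝ) (hεpos : ∀ p, 0 < ε p)
    (hε2 : ∀ p, (ε p)^2 = t^2 / (2*(p:ℝ)+1)) :
    Tendsto (fun p : ℕ => (2*(p:ℝ)+1) ^ (2*p+1) / ((2*p).factorial : ℝ) *
        ∫ w in Set.Ioi (ε p), (w^2 - (ε p)^2)^p * Real.exp (-((2*(p:ℝ)+1) * w)))
      atTop (𝓝 (Real.exp (-(t^2/2)))) := by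
  set N : ℕ → ℝ := fun p => 2*(p:ℝ)+1 with hNdef
  have hNpos : ∀ p, 0 < N p := fun p => by positivity
  have hNtop : Tendsto N atTop atTop := by
    apply tendsto_atTop_add_const_right
    exact (tendsto_natCast_atTop_atTop (R := ℝ)).const_mul_atTop two_pos
  set δ : ℕ → ℝ := fun p => min ((N p) ^ (-(4:ℝ)⁻¹)) (1/2) with hδdef
  have hδpos : ∀ p, 0 < δ p := fun p =>
    lt_min (Real.rpow_pos_of_pos (hNpos p) _) (by norm_num)
  have hδhalf : ∀ p, δ p ≤ 1/2 := fun p => min_le_right _ _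
  have hrpow0 : Tendsto (fun p => (N p) ^ (-(4:ℝ)⁻¹)) atTop (𝓝 0) :=
    (tendsto_rpow_neg_atTop (by norm_num)).comp hNtop
  have hevδ : ∀ᶠ p in atTop, δ p = (N p) ^ (-(4:ℝ)⁻¹) := by
    filter_upwards [hrpow0.eventually (eventually_le_nhds (by norm_num : (0:ℝ) < 1/2))]
      with p hp
    rw [hδdef]; exact min_eq_left hp
  have hδ0 : Tendsto δ atTop (𝓝 0) := hrpow0.congr' (hevδ.mono fun p hp => hp.symm)
  have hNδ0 : Tendsto (fun p => 1/(N p * (δ p)^2)) atTop (𝓝 0) := by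
    refine ((tendsto_rpow_neg_atTop (by norm_num : (0:ℝ) < 2⁻¹)).comp hNtop).congr' ?_
    filter_upwards [hevδ] with p hp
    have h1 : (δ p)^2 = (N p) ^ (-(2:ℝ)⁻¹) := by
      rw [hp, ← Real.rpow_natCast ((N p) ^ (-(4:ℝ)⁻¹)) 2, ← Real.rpow_mul (hNpos p).le]
      norm_num
    show (N p) ^ (-(2:ℝ)⁻¹) = 1/(N p * (δ p)^2)
    rw [h1, one_div]
    refine eq_inv_of_mul_eq_one_left ?_
    have h3 : N p ^ (-(2:ℝ)⁻¹) * N p ^ (-(2:ℝ)⁻¹) = N p ^ (-(1:ℝ)) := by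
      rw [← Real.rpow_add (hNpos p)]; norm_num
    calc N p ^ (-(2:ℝ)⁻¹) * (N p * (N p) ^ (-(2:ℝ)⁻¹))
        = (N p ^ (-(2:ℝ)⁻¹) * N p ^ (-(2:ℝ)⁻¹)) * N p := by ring
      _ = N p ^ (-(1:ℝ)) * N p := by rw [h3]
      _ = 1 := by rw [Real.rpow_neg_one, inv_mul_cancel₀ (hNpos p).ne']
  have hεeq : ∀ p, ε p = Real.sqrt (t^2 / N p) := fun p => by
    rw [← hε2 p, Real.sqrt_sq (hεpos p).le]
  have hε0 : Tendsto ε atTop (𝓝 0) := by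
    have h1 : Tendsto (fun p => t^2 / N p) atTop (𝓝 0) :=
      tendsto_const_nhds.div_atTop hNtop
    have h2 := (Real.continuous_sqrt.tendsto 0).comp h1
    rw [Real.sqrt_zero] at h2
    exact h2.congr (fun p => (hεeq p).symm)
  have hpN : Tendsto (fun p : ℕ => (p:ℝ)/(N p)) atTop (𝓝 (1/2)) := by
    have h1 : Tendsto (fun p : ℕ => (2 + 1/(p:ℝ))⁻¹) atTop (𝓝 (1/2)) := by
      have h2 : Tendsto (fun p : ℕ => 2 + 1/(p:ℝ)) atTop (𝓝 2) := by
        simpa using (tendsto_const_nhds (x := (2:ℝ))).add tendsto_one_div_atTop_nhds_zero_nat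
      simpa [one_div] using h2.inv₀ (by norm_num)
    refine h1.congr' ?_
    filter_upwards [eventually_ge_atTop 1] with p hp
    have hp' : (p:ℝ) ≠ 0 := Nat.cast_ne_zero.2 (by omega)
    rw [hNdef]
    field_simp
  have hHtendsto : ∀ (s : ℕ → ℝ), Tendsto s atTop (𝓝 1) → (∀ p, 0 < s p) →
      Tendsto (fun p : ℕ => (1 - (ε p)^2/(s p)^2) ^ p) atTop (𝓝 (Real.exp (-(t^2/2)))) := by
    intro s hs hspos
    set u : ℕ → ℝ := fun p => (ε p)^2/(s p)^2 with hudef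
    have hu : Tendsto (fun p : ℕ => (p:ℝ) * u p) atTop (𝓝 (t^2/2)) := by
      have heq : ∀ p : ℕ, (p:ℝ) * u p = t^2 * ((p:ℝ)/(N p)) * ((s p)^2)⁻¹ := by
        intro p
        rw [hudef]
        simp only
        rw [hε2 p]
        have h4 : N p ≠ 0 := (hNpos p).ne'
        have h5 : s p ≠ 0 := (hspos p).ne'
        field_simp
        ring
      have h2 : Tendsto (fun p : ℕ => t^2 * ((p:ℝ)/(N p)) * ((s p)^2)⁻¹) atTop
          (𝓝 (t^2 * (1/2) * 1)) := by
        refine ((tendsto_const_nhds.mul hpN).mul ?_)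
        have h6 : Tendsto (fun p => (s p)^2) atTop (𝓝 1) := by
          simpa using hs.pow 2
        simpa using h6.inv₀ (by norm_num)
      have h3 : t^2 * (1/2) * 1 = t^2/2 := by ring
      rw [h3] at h2
      exact h2.congr (fun p => (heq p).symm)
    have hu0 : Tendsto u atTop (𝓝 0) := by
      have h := hu.mul (tendsto_one_div_atTop_nhds_zero_nat)
      rw [mul_zero] at h
      refine h.congr' ?_
      filter_upwards [eventually_ge_atTop 1] with p hp
      have : (p:ℝ) ≠ 0 := Nat.cast_ne_zero.2 (by omega)
      field_simp
    exact tendsto_pow_one_sub hu (Eventually.of_forall fun p => by positivity)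
      (hu0.eventually (eventually_le_nhds (by norm_num)))
  have hplus : Tendsto (fun p : ℕ => 1 + δ p) atTop (𝓝 1) := by
    simpa using (tendsto_const_nhds (x := (1:ℝ))).add hδ0
  have hminus : Tendsto (fun p : ℕ => 1 - δ p) atTop (𝓝 1) := by
    simpa using (tendsto_const_nhds (x := (1:ℝ))).sub hδ0
  have hlowT : Tendsto (fun p : ℕ => (1 - (ε p)^2/(1 - δ p)^2) ^ p - 1/(N p * (δ p)^2))
      atTop (𝓝 (Real.exp (-(t^2/2)))) := by
    have h := (hHtendsto (fun p => 1 - δ p) hminus (fun p => by show (0:ℝ) < 1 - δ p; linarith [hδhalf p])).sub hNδ0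
    simpa using h
  have hupT : Tendsto (fun p : ℕ => (1 - (ε p)^2/(1 + δ p)^2) ^ p + 1/(N p * (δ p)^2))
      atTop (𝓝 (Real.exp (-(t^2/2)))) := by
    have h := (hHtendsto (fun p => 1 + δ p) hplus (fun p => by show (0:ℝ) < 1 + δ p; linarith [hδpos p])).add hNδ0
    simpa using h
  refine tendsto_of_tendsto_of_tendsto_of_le_of_le' hlowT hupT ?_ ?_
  · filter_upwards [hε0.eventually (eventually_le_nhds (by norm_num : (0:ℝ) < 1/4))] with p hp
    exact bound_lower p (hεpos p) hp (hδpos p) (hδhalf p)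
  · filter_upwards [hε0.eventually (eventually_le_nhds (by norm_num : (0:ℝ) < 1/4))] with p hp
    exact bound_upper p (hεpos p) hp (hδpos p) (hδhalf p)

lemma matern_eq_integral (p : ℕ) {b : ℝ} (hb : 0 < b) (a τ : ℝ) (hx : 0 ≤ a * |τ|) :
    maternKernel p a τ = b ^ (2*p+1) / ((2*p).factorial : ℝ) *
      ∫ w in Set.Ioi (a * |τ| / b), (w^2 - (a * |τ| / b)^2)^p * Real.exp (-(b*w)) := by
  set x := a * |τ| with hxdef
  set ε := x / b with hedef
  have hε : 0 ≤ ε := div_nonneg hx hb.le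
  have hbε : b * ε = x := by rw [hedef]; field_simp
  -- pointwise expansion
  have hpt : ∀ w ∈ Set.Ioi ε, (w^2 - ε^2)^p * Real.exp (-(b*w))
      = ∑ k ∈ Finset.range (p+1),
          ((p.choose k : ℝ) * (2*ε)^(p-k)) * ((w - ε)^(p+k) * Real.exp (-(b*w))) := by
    intro w _
    rw [show w^2 - ε^2 = (w - ε) * ((w - ε) + 2*ε) by ring, mul_pow, add_pow]
    rw [Finset.mul_sum, Finset.sum_mul]
    refine Finset.sum_congr rfl fun k hk => ?_
    ring
  rw [setIntegral_congr_fun measurableSet_Ioi hpt]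
  rw [integral_finset_sum _ (fun k hk => (Integrable.const_mul
    ((integrableOn_shift_pow_exp (p+k) hb hε)) _))]
  have hsum : ∀ k ∈ Finset.range (p+1),
      (∫ w in Set.Ioi ε, ((p.choose k : ℝ) * (2*ε)^(p-k)) * ((w - ε)^(p+k) * Real.exp (-(b*w))))
      = ((p.choose k : ℝ) * (2*ε)^(p-k)) * (Real.exp (-(b*ε)) * (((p+k).factorial : ℝ) / b ^ (p+k+1))) := by
    intro k hk
    rw [integral_const_mul]
    rw [integral_shift_pow_exp (p+k) hb ε]
  rw [Finset.sum_congr rfl hsum]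
  rw [maternKernel, Finset.mul_sum, Finset.mul_sum]
  refine Finset.sum_congr rfl fun k hk => ?_
  have hkp : k ≤ p := Nat.lt_succ_iff.mp (Finset.mem_range.mp hk)
  have hbε' : Real.exp (-(b*ε)) = Real.exp (-a * |τ|) := by rw [hbε, hxdef, neg_mul]
  have hchoose : (p.choose k : ℝ) * (k.factorial : ℝ) * ((p-k).factorial : ℝ) = (p.factorial : ℝ) := by
    exact_mod_cast congrArg (Nat.cast : ℕ → ℝ) (Nat.choose_mul_factorial_mul_factorial hkp)
  have hpow : (2*ε)^(p-k) * b^(p-k) = (2*x)^(p-k) := by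
    rw [← mul_pow]; congr 1; field_simp [hedef]; rw [mul_comm, hbε]
  have hbpow : b ^ (2*p+1) = b^(p-k) * b^(p+k+1) := by
    rw [← pow_add]; congr 1; omega
  rw [hbε']
  have hb' : (b:ℝ) ≠ 0 := hb.ne'
  have hf1 : ((2*p).factorial : ℝ) ≠ 0 := Nat.cast_ne_zero.2 (Nat.factorial_ne_zero _)
  have hf2 : (k.factorial : ℝ) ≠ 0 := Nat.cast_ne_zero.2 (Nat.factorial_ne_zero _)
  have hf3 : ((p-k).factorial : ℝ) ≠ 0 := Nat.cast_ne_zero.2 (Nat.factorial_ne_zero _)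
  have h2x : (2 * a * |τ|) = 2 * x := by rw [hxdef]; ring
  rw [h2x]
  have key : (p.choose k : ℝ) = (p.factorial : ℝ) / ((k.factorial : ℝ) * ((p-k).factorial : ℝ)) := by
    field_simp
    linarith [hchoose]
  rw [key, ← hpow, hbpow]
  field_simp

lemma matern_zero (p : ℕ) (a : ℝ) : maternKernel p a 0 = 1 := by
  rw [maternKernel]
  have hsum : ∑ i ∈ Finset.range (p + 1),
      (((p + i).factorial : ℝ) / ((i.factorial : ℝ) * ((p - i).factorial : ℝ))) *
        (2 * a * |(0:ℝ)|) ^ (p - i)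
      = ((2*p).factorial : ℝ) / (p.factorial : ℝ) := by
    rw [Finset.sum_eq_single p]
    · simp [Nat.sub_self]
      norm_num [two_mul]
    · intro i hi hne
      have : i < p := by
        rcases Nat.lt_succ_iff.mp (Finset.mem_range.mp hi) |>.lt_or_eq with h | h
        · exact h
        · exact absurd h hne
      have hpi : 0 < p - i := Nat.sub_pos_of_lt this
      simp [abs_zero, zero_pow hpi.ne']
    · intro h
      exact absurd (Finset.self_mem_range_succ p) h
  rw [hsum]
  have hf : (p.factorial : ℝ) ≠ 0 := Nat.cast_ne_zero.2 (Nat.factorial_ne_zero _)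
  have hf2 : ((2*p).factorial : ℝ) ≠ 0 := Nat.cast_ne_zero.2 (Nat.factorial_ne_zero _)
  simp [abs_zero]
  field_simp

end Aux

/-- The Matérn kernels of half-integer order with decay rate `√(2p+1)/ℓ` converge
pointwise to the squared-exponential kernel `exp(−τ²/(2ℓ²))` as `p → ∞`. -/
theorem matern_tendsto_squared_exponential (ℓ : ℝ) (hℓ : 0 < ℓ) (τ : ℝ) :
    Filter.Tendsto
      (fun p : ℕ => maternKernel p (Real.sqrt (2 * p + 1) / ℓ) τ)
      Filter.atTop (nhds (Real.exp (-τ ^ 2 / (2 * ℓ ^ 2)))) := by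
  rcases eq_or_ne τ 0 with rfl | hτ
  · simp only [matern_zero]
    norm_num
  · have habs : 0 < |τ| := abs_pos.2 hτ
    set t : ℝ := |τ| / ℓ with htdef
    have ht : 0 < t := div_pos habs hℓ
    set ε : ℕ → ℝ := fun p => (Real.sqrt (2 * (p:ℝ) + 1) / ℓ) * |τ| / (2*(p:ℝ)+1) with hεdef
    have hNpos : ∀ p : ℕ, (0:ℝ) < 2*(p:ℝ)+1 := fun p => by positivity
    have hεpos : ∀ p, 0 < ε p := fun p => by
      have hs : 0 < Real.sqrt (2*(p:ℝ)+1) := Real.sqrt_pos.2 (hNpos p)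
      exact div_pos (mul_pos (div_pos hs hℓ) habs) (hNpos p)
    have hε2 : ∀ p, (ε p)^2 = t^2 / (2*(p:ℝ)+1) := by
      intro p
      rw [hεdef, htdef]
      simp only
      rw [div_pow, div_pow, mul_pow, div_pow, Real.sq_sqrt (hNpos p).le, sq_abs]
      field_simp
    have hcore := core_tendsto ht ε hεpos hε2
    have heq : ∀ p : ℕ, maternKernel p (Real.sqrt (2 * (p:ℕ) + 1) / ℓ) τ
        = (2*(p:ℝ)+1) ^ (2*p+1) / ((2*p).factorial : ℝ) *
          ∫ w in Set.Ioi (ε p), (w^2 - (ε p)^2)^p * Real.exp (-((2*(p:ℝ)+1) * w)) := by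
      intro p
      have := matern_eq_integral p (hNpos p) (Real.sqrt (2 * (p:ℝ) + 1) / ℓ) τ
        (by positivity)
      rw [this]
    have hval : Real.exp (-(t^2/2)) = Real.exp (-τ ^ 2 / (2 * ℓ ^ 2)) := by
      congr 1
      rw [htdef, div_pow, sq_abs]
      field_simp
    rw [← hval]
    exact hcore.congr (fun p => (heq p).symm)
end

section
/- Let p ∈ ℕ and a > 0. Then for every ω ∈ ℝ, the Fourier cosine transform of τ^p e^{−aτ} is given by ∫₀^∞ τ^p e^{−aτ} cos(ωτ) dτ = p! · (a² + ω²)^{−(p+1)} · Σ_{m=0}^{⌊(p+1)/2⌋} (−1)^m C(p+1, 2m) a^{p+1−2m} ω^{2m}, where C(n, k) is the binomial coefficient. -/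
open MeasureTheory Real

open Set Filter Complex in
private lemma real_int_aux (n : ℕ) {b : ℝ} (hb : 0 < b) :
    IntegrableOn (fun t : ℝ => t ^ n * Real.exp (-b * t)) (Set.Ioi 0) := by
  have h := integrableOn_rpow_mul_exp_neg_mul_rpow (p := 1) (s := (n : ℝ))
    (lt_of_lt_of_le neg_one_lt_zero (Nat.cast_nonneg n)) one_pos hb
  refine h.congr_fun (fun x hx => ?_) measurableSet_Ioi
  beta_reduce
  rw [Real.rpow_natCast, Real.rpow_one]

open Set Filter Complex in
private lemma cpx_int_aux (n : ℕ) {c : ℂ} (hc : 0 < c.re) :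
    IntegrableOn (fun t : ℝ => (t : ℂ) ^ n * Complex.exp (-c * t)) (Set.Ioi 0) := by
  have hm : AEStronglyMeasurable (fun t : ℝ => (t : ℂ) ^ n * Complex.exp (-c * t))
      (volume.restrict (Set.Ioi 0)) := by
    apply Continuous.aestronglyMeasurable
    continuity
  refine Integrable.mono' (real_int_aux n hc) hm ?_
  filter_upwards [ae_restrict_mem measurableSet_Ioi] with t ht
  rw [Set.mem_Ioi] at ht
  rw [norm_mul, norm_pow, Complex.norm_exp,
    Complex.norm_real, Real.norm_eq_abs, abs_of_pos ht]
  have : (-c * (t : ℂ)).re = -c.re * t := by simp [Complex.mul_re]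
  rw [this]

open Set Filter Complex in
private lemma cpx_tendsto_aux (k : ℕ) {c : ℂ} (hc : 0 < c.re) (d : ℂ) :
    Tendsto (fun t : ℝ => d * (t : ℂ) ^ k * Complex.exp (-c * t)) atTop (nhds 0) := by
  rw [tendsto_zero_iff_norm_tendsto_zero]
  have hlim : Tendsto (fun t : ℝ => ‖d‖ * (t ^ (k : ℝ) * Real.exp (-c.re * t))) atTop
      (nhds (‖d‖ * 0)) :=
    (tendsto_rpow_mul_exp_neg_mul_atTop_nhds_zero (k : ℝ) c.re hc).const_mul ‖d‖
  rw [mul_zero] at hlim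
  apply squeeze_zero_norm' _ hlim
  filter_upwards [eventually_gt_atTop (0 : ℝ)] with t ht
  have h1 : (-c * (t : ℂ)).re = -c.re * t := by simp [Complex.mul_re]
  have h2 : ‖d * (t : ℂ) ^ k * Complex.exp (-c * t)‖
      = ‖d‖ * (t ^ (k : ℝ) * Real.exp (-c.re * t)) := by
    rw [norm_mul, norm_mul, norm_pow, Complex.norm_exp, h1,
      Complex.norm_real, Real.norm_eq_abs, _root_.abs_of_pos ht,
      Real.rpow_natCast, mul_assoc]
  rw [Real.norm_eq_abs, _root_.abs_of_nonneg (norm_nonneg _), h2]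

open Set Filter Complex in
private lemma cpx_integral_aux {c : ℂ} (hc : 0 < c.re) :
    ∀ n : ℕ, ∫ t in Set.Ioi (0 : ℝ), (t : ℂ) ^ n * Complex.exp (-c * t)
      = (n.factorial : ℂ) / c ^ (n + 1) := by
  have hcne : c ≠ 0 := fun h => by simp [h] at hc
  intro n
  induction n with
  | zero =>
    have hderiv : ∀ x : ℝ, x ∈ Set.Ioi (0 : ℝ) →
        HasDerivAt (fun t : ℝ => -c⁻¹ * Complex.exp (-c * t))
          ((x : ℂ) ^ 0 * Complex.exp (-c * x)) x := by
      intro x _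
      have h1 : HasDerivAt (fun z : ℂ => -c⁻¹ * Complex.exp (-c * z))
          (-c⁻¹ * (Complex.exp (-c * (x : ℂ)) * (-c * 1))) (x : ℂ) :=
        (((hasDerivAt_id (x : ℂ)).const_mul (-c)).cexp).const_mul (-c⁻¹)
      have h2 := h1.comp_ofReal
      convert h2 using 1
      field_simp
    have hcont : ContinuousWithinAt (fun t : ℝ => -c⁻¹ * Complex.exp (-c * t))
        (Set.Ici 0) 0 := by
      apply Continuous.continuousWithinAt
      continuity
    have htend := cpx_tendsto_aux 0 hc (-c⁻¹)
    simp only [pow_zero, mul_one] at htend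
    have := integral_Ioi_of_hasDerivAt_of_tendsto hcont hderiv (cpx_int_aux 0 hc) htend
    rw [this]
    simp [Complex.exp_zero]
  | succ n ih =>
    have hderiv : ∀ x : ℝ, x ∈ Set.Ioi (0 : ℝ) →
        HasDerivAt (fun t : ℝ => -c⁻¹ * ((t : ℂ) ^ (n + 1) * Complex.exp (-c * t)))
          ((x : ℂ) ^ (n + 1) * Complex.exp (-c * x)
            - c⁻¹ * ((n + 1 : ℕ) : ℂ) * ((x : ℂ) ^ n * Complex.exp (-c * x))) x := by
      intro x _
      have h1 : HasDerivAt (fun z : ℂ => -c⁻¹ * (z ^ (n + 1) * Complex.exp (-c * z)))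
          (-c⁻¹ * (((n + 1 : ℕ) : ℂ) * (x : ℂ) ^ (n + 1 - 1) * Complex.exp (-c * (x : ℂ))
            + (x : ℂ) ^ (n + 1) * (Complex.exp (-c * (x : ℂ)) * (-c * 1)))) (x : ℂ) :=
        ((hasDerivAt_pow (n + 1) (x : ℂ)).mul
          (((hasDerivAt_id (x : ℂ)).const_mul (-c)).cexp)).const_mul (-c⁻¹)
      have h2 := h1.comp_ofReal
      convert h2 using 1
      simp only [Nat.add_sub_cancel]
      field_simp
      ring
    have hcont : ContinuousWithinAt
        (fun t : ℝ => -c⁻¹ * ((t : ℂ) ^ (n + 1) * Complex.exp (-c * t)))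
        (Set.Ici 0) 0 := by
      apply Continuous.continuousWithinAt
      continuity
    have htend : Tendsto (fun t : ℝ => -c⁻¹ * ((t : ℂ) ^ (n + 1) * Complex.exp (-c * t)))
        atTop (nhds 0) := by
      have := cpx_tendsto_aux (n + 1) hc (-c⁻¹)
      simpa [mul_assoc] using this
    have hint : IntegrableOn
        (fun x : ℝ => (x : ℂ) ^ (n + 1) * Complex.exp (-c * x)
          - c⁻¹ * ((n + 1 : ℕ) : ℂ) * ((x : ℂ) ^ n * Complex.exp (-c * x)))
        (Set.Ioi 0) :=
      (cpx_int_aux (n + 1) hc).sub ((cpx_int_aux n hc).const_mul _)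
    have hftc := integral_Ioi_of_hasDerivAt_of_tendsto hcont hderiv hint htend
    have hsplit : ∫ x in Set.Ioi (0 : ℝ),
        ((x : ℂ) ^ (n + 1) * Complex.exp (-c * x)
          - c⁻¹ * ((n + 1 : ℕ) : ℂ) * ((x : ℂ) ^ n * Complex.exp (-c * x)))
        = (∫ x in Set.Ioi (0 : ℝ), (x : ℂ) ^ (n + 1) * Complex.exp (-c * x))
          - c⁻¹ * ((n + 1 : ℕ) : ℂ) * ∫ x in Set.Ioi (0 : ℝ), (x : ℂ) ^ n * Complex.exp (-c * x) := by
      rw [integral_sub (cpx_int_aux (n + 1) hc) ((cpx_int_aux n hc).const_mul _),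
        integral_const_mul]
    rw [hsplit, ih] at hftc
    have h0 : (-c⁻¹ * (((0 : ℝ) : ℂ) ^ (n + 1) * Complex.exp (-c * (0 : ℝ)))) = 0 := by
      simp
    rw [h0, zero_sub, neg_zero] at hftc
    have : (∫ x in Set.Ioi (0 : ℝ), (x : ℂ) ^ (n + 1) * Complex.exp (-c * x))
        = c⁻¹ * ((n + 1 : ℕ) : ℂ) * ((n.factorial : ℂ) / c ^ (n + 1)) := by
      linear_combination hftc
    rw [this, Nat.factorial_succ]
    push_cast
    simp only [div_eq_mul_inv, pow_succ, mul_inv]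
    ring

open Complex in
private lemma re_pow_expand (a ω : ℝ) (n : ℕ) :
    (((a : ℂ) + ω * Complex.I) ^ n).re
      = ∑ m ∈ Finset.range (n / 2 + 1),
          (-1 : ℝ) ^ m * (n.choose (2 * m) : ℝ) * a ^ (n - 2 * m) * ω ^ (2 * m) := by
  have hexp : ((a : ℂ) + ω * Complex.I) ^ n
      = ∑ k ∈ Finset.range (n + 1),
          ((ω : ℂ) * Complex.I) ^ k * (a : ℂ) ^ (n - k) * (n.choose k : ℂ) := by
    rw [add_comm, add_pow]
  rw [hexp, Complex.re_sum]
  have hterm : ∀ k, (((ω : ℂ) * Complex.I) ^ k * (a : ℂ) ^ (n - k) * (n.choose k : ℂ)).re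
      = (ω ^ k * a ^ (n - k) * (n.choose k : ℝ)) * (Complex.I ^ k).re := by
    intro k
    rw [mul_pow]
    rw [show (ω : ℂ) ^ k * Complex.I ^ k * (a : ℂ) ^ (n - k) * (n.choose k : ℂ)
        = ((ω ^ k * a ^ (n - k) * (n.choose k : ℝ) : ℝ) : ℂ) * Complex.I ^ k by
      push_cast; ring]
    rw [Complex.re_ofReal_mul]
  simp_rw [hterm]
  rw [← Finset.sum_filter_add_sum_filter_not (Finset.range (n + 1)) (fun k => Even k)]
  have hodd : ∑ k ∈ (Finset.range (n + 1)).filter (fun k => ¬ Even k),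
      (ω ^ k * a ^ (n - k) * (n.choose k : ℝ)) * (Complex.I ^ k).re = 0 := by
    apply Finset.sum_eq_zero
    intro k hk
    simp only [Finset.mem_filter] at hk
    obtain ⟨m, rfl⟩ := (Nat.not_even_iff_odd.mp hk.2)
    have hz : (Complex.I ^ (2 * m + 1)).re = 0 := by
      rw [show Complex.I ^ (2 * m + 1) = (-1 : ℂ) ^ m * Complex.I by
        rw [pow_add, pow_mul, Complex.I_sq, pow_one],
        Complex.mul_re, Complex.I_re, Complex.I_im, mul_zero, mul_one, zero_sub,
        show ((-1 : ℂ)) ^ m = (((-1 : ℝ) ^ m : ℝ) : ℂ) by norm_cast,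
        Complex.ofReal_im, neg_zero]
    rw [hz, mul_zero]
  rw [hodd, add_zero]
  refine (Finset.sum_nbij' (fun m => 2 * m) (fun k => k / 2) ?_ ?_ ?_ ?_ ?_).symm
  · intro m hm
    simp only [Finset.mem_range, Nat.lt_succ_iff] at hm ⊢
    simp only [Finset.mem_filter, Finset.mem_range, Nat.lt_succ_iff]
    exact ⟨(Nat.le_div_iff_mul_le (by norm_num)).mp hm |>.trans_eq' (by ring),
      even_two_mul m⟩
  · intro k hk
    simp only [Finset.mem_filter, Finset.mem_range, Nat.lt_succ_iff] at hk
    simp only [Finset.mem_range, Nat.lt_succ_iff]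
    exact Nat.div_le_div_right hk.1
  · intro m _
    exact Nat.mul_div_cancel_left m (by norm_num)
  · intro k hk
    simp only [Finset.mem_filter] at hk
    exact Nat.mul_div_cancel' hk.2.two_dvd
  · intro m _
    rw [show Complex.I ^ (2 * m) = (-1 : ℂ) ^ m by rw [pow_mul, Complex.I_sq]]
    have : ((-1 : ℂ) ^ m).re = (-1 : ℝ) ^ m := by
      rw [show ((-1 : ℂ) ^ m) = (((-1 : ℝ) ^ m : ℝ) : ℂ) by push_cast; ring]
      rw [Complex.ofReal_re]
    rw [this]
    ring

/-- The Fourier cosine transform of `τ^p e^{−aτ}`: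
`∫₀^∞ τ^p e^{−aτ} cos(ωτ) dτ
  = p! (a² + ω²)^{−(p+1)} Σ_{m=0}^{⌊(p+1)/2⌋} (−1)^m C(p+1, 2m) a^{p+1−2m} ω^{2m}`. -/
theorem fourier_cosine_canonical_filter (p : ℕ) (a : ℝ) (ha : 0 < a) (ω : ℝ) :
    ∫ τ in Set.Ioi (0 : ℝ), τ ^ p * Real.exp (-a * τ) * Real.cos (ω * τ)
      = (p.factorial : ℝ) * ((a ^ 2 + ω ^ 2) ^ (p + 1))⁻¹ *
          ∑ m ∈ Finset.range ((p + 1) / 2 + 1),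
            (-1 : ℝ) ^ m * ((p + 1).choose (2 * m) : ℝ) *
              a ^ (p + 1 - 2 * m) * ω ^ (2 * m) := by
  set c : ℂ := (a : ℂ) - ω * Complex.I with hc_def
  have hc : 0 < c.re := by simp [hc_def, ha]
  have hcne : c ≠ 0 := fun h => by simp [h] at hc
  have hre : ∀ τ : ℝ, τ ^ p * Real.exp (-a * τ) * Real.cos (ω * τ)
      = ((τ : ℂ) ^ p * Complex.exp (-c * τ)).re := by
    intro τ
    rw [show (τ : ℂ) ^ p * Complex.exp (-c * τ)
        = ((τ ^ p : ℝ) : ℂ) * Complex.exp (-c * τ) by push_cast; ring]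
    rw [Complex.re_ofReal_mul, Complex.exp_re]
    have h1 : (-c * (τ : ℂ)).re = -a * τ := by simp [hc_def, Complex.mul_re]
    have h2 : (-c * (τ : ℂ)).im = ω * τ := by simp [hc_def, Complex.mul_im]
    rw [h1, h2, mul_assoc]
  calc ∫ τ in Set.Ioi (0 : ℝ), τ ^ p * Real.exp (-a * τ) * Real.cos (ω * τ)
      = ∫ τ in Set.Ioi (0 : ℝ), ((τ : ℂ) ^ p * Complex.exp (-c * τ)).re := by
        simp_rw [hre]
    _ = ((p.factorial : ℂ) / c ^ (p + 1)).re := by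
        rw [← cpx_integral_aux hc p]
        exact integral_re (cpx_int_aux p hc)
    _ = (p.factorial : ℝ) * ((a ^ 2 + ω ^ 2) ^ (p + 1))⁻¹ *
          ∑ m ∈ Finset.range ((p + 1) / 2 + 1),
            (-1 : ℝ) ^ m * ((p + 1).choose (2 * m) : ℝ) *
              a ^ (p + 1 - 2 * m) * ω ^ (2 * m) := by
        have hpos : (0 : ℝ) < a ^ 2 + ω ^ 2 := by positivity
        have hkey : (p.factorial : ℂ) / c ^ (p + 1)
            = (((p.factorial : ℝ) * ((a ^ 2 + ω ^ 2) ^ (p + 1))⁻¹ : ℝ) : ℂ) *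
                ((a : ℂ) + ω * Complex.I) ^ (p + 1) := by
          rw [div_eq_iff (pow_ne_zero _ hcne)]
          symm
          have hmul : ((a : ℂ) + ω * Complex.I) * c = ((a ^ 2 + ω ^ 2 : ℝ) : ℂ) := by
            rw [hc_def]
            push_cast
            linear_combination (-(ω : ℂ) ^ 2) * Complex.I_mul_I
          calc (((p.factorial : ℝ) * ((a ^ 2 + ω ^ 2) ^ (p + 1))⁻¹ : ℝ) : ℂ) *
                ((a : ℂ) + ω * Complex.I) ^ (p + 1) * c ^ (p + 1)
              = (((p.factorial : ℝ) * ((a ^ 2 + ω ^ 2) ^ (p + 1))⁻¹ : ℝ) : ℂ) *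
                (((a : ℂ) + ω * Complex.I) * c) ^ (p + 1) := by
                rw [mul_pow, mul_assoc]
            _ = (((p.factorial : ℝ) * ((a ^ 2 + ω ^ 2) ^ (p + 1))⁻¹ : ℝ) : ℂ) *
                ((a ^ 2 + ω ^ 2 : ℝ) : ℂ) ^ (p + 1) := by rw [hmul]
            _ = ((((p.factorial : ℝ) * (((a ^ 2 + ω ^ 2) ^ (p + 1))⁻¹ *
                  (a ^ 2 + ω ^ 2) ^ (p + 1))) : ℝ) : ℂ) := by
                push_cast
                ring
            _ = (p.factorial : ℂ) := by
                rw [inv_mul_cancel₀ (ne_of_gt (by positivity :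
                  (0 : ℝ) < (a ^ 2 + ω ^ 2) ^ (p + 1))), mul_one]
                norm_cast
        rw [hkey, Complex.re_ofReal_mul, re_pow_expand]
end
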